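/- arXiv:1207.0564 — 2 statements merged into one kernel-verified Lean document; each statement's English description precedes it below -/
import Mathlib

section
/- Let α : Ω → ℝ be continuously differentiable, let u : Ω → ℝ be C^2 and vanish on ∂Ω, and set f = −∂/∂x(α·∂u/∂x) − ∂/∂y(α·∂u/∂y). Then the finite volume bilinear form is variationally exact: for every test function w, a_P(u, w) = Σ_{(i,k;j,l)} w_{i,k;j,l} · ∫_{τ'_{i,k;j,l}} f dx dy, where the sum runs over all 1 ≤ i ≤ m, 1 ≤ k ≤ r, 1 ≤ j ≤ n, 1 ≤ l ≤ r with (i,k) ≠ (m,r) and (j,l) ≠ (n,r), and τ'_{i,k;j,l} = [g^x_{i,k}, g^x_{i,k+1}] × [g^y_{j,l}, g^y_{j,l+1}]. -/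
open Polynomial MeasureTheory

noncomputable section

/-- `Leg r` is the `r`-th (formal) derivative of `(X² − 1)^r`, a nonzero scalar
multiple of the degree-`r` Legendre polynomial. -/
def Leg (r : ℕ) : Polynomial ℝ :=
  (fun p => Polynomial.derivative p)^[r] ((Polynomial.X ^ 2 - 1) ^ r)

/-- `G 1 < … < G r` are the Gauss points: the roots of `Leg r`, all in `(-1,1)`. -/
def IsGaussPoints (r : ℕ) (G : ℕ → ℝ) : Prop :=
  (∀ k, 1 ≤ k → k < r → G k < G (k + 1)) ∧
  ∀ k, 1 ≤ k → k ≤ r → G k ∈ Set.Ioo (-1 : ℝ) 1 ∧ (Leg r).IsRoot (G k)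

/-- `A k = ∫_{-1}^{1} ℓ_k` where `ℓ_k` is the Lagrange basis polynomial of degree
`≤ r - 1` at the Gauss points, i.e. `ℓ_k (G j) = δ_{jk}`. -/
def IsGaussWeights (r : ℕ) (G A : ℕ → ℝ) : Prop :=
  ∀ k, 1 ≤ k → k ≤ r → ∃ ℓ : Polynomial ℝ,
    ℓ.natDegree ≤ r - 1 ∧
    (∀ j, 1 ≤ j → j ≤ r → ℓ.eval (G j) = if j = k then 1 else 0) ∧
    A k = ∫ x in (-1 : ℝ)..1, ℓ.eval x

/-- `Lob 0 = −1 < Lob 1 < … < Lob (r−1) < Lob r = 1` are the Lobatto points: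
`±1` together with the roots of the derivative of `Leg r`. -/
def IsLobattoPoints (r : ℕ) (L : ℕ → ℝ) : Prop :=
  L 0 = -1 ∧ L r = 1 ∧ (∀ k < r, L k < L (k + 1)) ∧
  ∀ k, 1 ≤ k → k + 1 ≤ r → L k ∈ Set.Ioo (-1 : ℝ) 1 ∧
    (Polynomial.derivative (Leg r)).IsRoot (L k)

/-- Cellwise partial derivative in the first (`x`) coordinate. -/
def pdx (f : ℝ × ℝ → ℝ) (z : ℝ × ℝ) : ℝ := fderiv ℝ f z (1, 0)

/-- Cellwise partial derivative in the second (`y`) coordinate. -/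
def pdy (f : ℝ × ℝ → ℝ) (z : ℝ × ℝ) : ℝ := fderiv ℝ f z (0, 1)

/-- A rectangular partition of `Ω = [a,b] × [c,d]`:
`a = x₀ < x₁ < … < x_m = b`, `c = y₀ < y₁ < … < y_n = d`. -/
structure RectPartition (a b c d : ℝ) where
  m : ℕ
  n : ℕ
  hm : 0 < m
  hn : 0 < n
  x : ℕ → ℝ
  y : ℕ → ℝ
  hxa : x 0 = a
  hxb : x m = b
  hyc : y 0 = c
  hyd : y n = d
  hxlt : ∀ i < m, x i < x (i + 1)
  hylt : ∀ j < n, y j < y (j + 1)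

namespace RectPartition

variable {a b c d : ℝ}

/-- The domain `Ω = [a,b] × [c,d]`. -/
def dom (_P : RectPartition a b c d) : Set (ℝ × ℝ) := Set.Icc a b ×ˢ Set.Icc c d

/-- The boundary `∂Ω`. -/
def bdry (P : RectPartition a b c d) : Set (ℝ × ℝ) :=
  P.dom \ (Set.Ioo a b ×ˢ Set.Ioo c d)

variable (P : RectPartition a b c d)

/-- Side length `h_i^x = x_i − x_{i−1}`. -/
def hx (i : ℕ) : ℝ := P.x i - P.x (i - 1)

/-- Side length `h_j^y = y_j − y_{j−1}`. -/
def hy (j : ℕ) : ℝ := P.y j - P.y (j - 1)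

/-- The closed cell `τ_{i,j} = [x_{i−1}, x_i] × [y_{j−1}, y_j]`. -/
def cell (i j : ℕ) : Set (ℝ × ℝ) :=
  Set.Icc (P.x (i - 1)) (P.x i) ×ˢ Set.Icc (P.y (j - 1)) (P.y j)

/-- The open cell `(x_{i−1}, x_i) × (y_{j−1}, y_j)`. -/
def openCell (i j : ℕ) : Set (ℝ × ℝ) :=
  Set.Ioo (P.x (i - 1)) (P.x i) ×ˢ Set.Ioo (P.y (j - 1)) (P.y j)

/-- The finite set of all side lengths of the partition. -/
def sides : Finset ℝ := ((Finset.Icc 1 P.m).image P.hx) ∪ ((Finset.Icc 1 P.n).image P.hy)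

lemma sides_nonempty : P.sides.Nonempty :=
  ⟨P.hx 1, Finset.mem_union_left _
    (Finset.mem_image_of_mem _ (Finset.mem_Icc.mpr ⟨le_rfl, P.hm⟩))⟩

/-- The mesh size `h`: the largest side length. -/
def meshSize : ℝ := P.sides.max' P.sides_nonempty

/-- `σ`-quasi-uniformity: every side length is at most `σ` times any other,
i.e. `h ≤ σ · min side`. -/
def QuasiUniform (σ : ℝ) : Prop := ∀ s ∈ P.sides, ∀ t ∈ P.sides, s ≤ σ * t

variable (r : ℕ) (G : ℕ → ℝ)

/-- The Gauss point `g^x_{i,k} = (x_i + x_{i−1} + h_i^x G_k)/2` for `1 ≤ k ≤ r`,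
with the conventions `g^x_{i,r+1} = g^x_{i+1,1}` (for `i < m`) and `g^x_{m,r+1} = b`. -/
def gx (i k : ℕ) : ℝ :=
  if k = r + 1 then
    (if i = P.m then P.x P.m
     else (P.x (i + 1) + P.x i + P.hx (i + 1) * G 1) / 2)
  else (P.x i + P.x (i - 1) + P.hx i * G k) / 2

/-- The Gauss point `g^y_{j,l}`, with the analogous conventions. -/
def gy (j l : ℕ) : ℝ :=
  if l = r + 1 then
    (if j = P.n then P.y P.n
     else (P.y (j + 1) + P.y j + P.hy (j + 1) * G 1) / 2)
  else (P.y j + P.y (j - 1) + P.hy j * G l) / 2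

end RectPartition

/-- A function on `Ω` which is piecewise smooth with respect to the partition:
a global function together with, for each cell, a (smooth) extension of its
restriction to the closed cell; cellwise derivatives are derivatives of the
cell functions. -/
structure PiecewiseFun {a b c d : ℝ} (P : RectPartition a b c d) where
  toFun : ℝ × ℝ → ℝ
  cellFun : ℕ → ℕ → ℝ × ℝ → ℝ
  agree : ∀ i ∈ Finset.Icc 1 P.m, ∀ j ∈ Finset.Icc 1 P.n, ∀ z ∈ P.cell i j,
    cellFun i j z = toFun z

namespace PiecewiseFun

variable {a b c d : ℝ} {P : RectPartition a b c d}

/-- Difference of two piecewise functions. -/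
def sub (u v : PiecewiseFun P) : PiecewiseFun P where
  toFun := fun z => u.toFun z - v.toFun z
  cellFun := fun i j z => u.cellFun i j z - v.cellFun i j z
  agree := fun i hi j hj z hz => by
    simp only [u.agree i hi j hj z hz, v.agree i hi j hj z hz]

end PiecewiseFun

/-- Cellwise `∂/∂x` of a piecewise function. -/
def cellDx {a b c d : ℝ} {P : RectPartition a b c d} (v : PiecewiseFun P) :
    ℕ → ℕ → ℝ × ℝ → ℝ := fun i j => pdx (v.cellFun i j)

/-- Cellwise `∂/∂y` of a piecewise function. -/
def cellDy {a b c d : ℝ} {P : RectPartition a b c d} (v : PiecewiseFun P) :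
    ℕ → ℕ → ℝ × ℝ → ℝ := fun i j => pdy (v.cellFun i j)

/-- `v` is `C^s` on each closed cell. -/
def CellSmooth {a b c d : ℝ} (P : RectPartition a b c d) (s : ℕ)
    (u : PiecewiseFun P) : Prop :=
  ∀ i ∈ Finset.Icc 1 P.m, ∀ j ∈ Finset.Icc 1 P.n, ContDiff ℝ s (u.cellFun i j)

/-- Evaluation of a bivariate polynomial (outer variable ↦ `x`, coefficients are
polynomials in `y`). -/
def evalXY (p : Polynomial (Polynomial ℝ)) (x y : ℝ) : ℝ :=
  (p.map (Polynomial.evalRingHom y)).eval x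

/-- `f` is (globally) a polynomial of degree `≤ r` in each of the two variables. -/
def IsBiPoly (r : ℕ) (f : ℝ × ℝ → ℝ) : Prop :=
  ∃ p : Polynomial (Polynomial ℝ), p.natDegree ≤ r ∧ (∀ k, (p.coeff k).natDegree ≤ r) ∧
    ∀ x y : ℝ, f (x, y) = evalXY p x y

/-- Membership in the trial space `U_P^r`: continuous on `Ω`, vanishing on `∂Ω`,
and a bi-degree `≤ r` polynomial on each cell. -/
def IsTrialFun {a b c d : ℝ} (r : ℕ) (P : RectPartition a b c d)
    (v : PiecewiseFun P) : Prop :=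
  ContinuousOn v.toFun P.dom ∧ (∀ z ∈ P.bdry, v.toFun z = 0) ∧
  ∀ i ∈ Finset.Icc 1 P.m, ∀ j ∈ Finset.Icc 1 P.n, IsBiPoly r (v.cellFun i j)

/-- The coefficients of a test function extended by the conventions
`w_{i,0;j,l} = w_{i−1,r;j,l}` (`0` if `i = 1`) and
`w_{i,k;j,0} = w_{i,k;j−1,r}` (`0` if `j = 1`). -/
def wE (r : ℕ) (w : ℕ → ℕ → ℕ → ℕ → ℝ) (i k j l : ℕ) : ℝ :=
  if (k = 0 ∧ i = 1) ∨ (l = 0 ∧ j = 1) then 0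
  else
    w (if k = 0 then i - 1 else i) (if k = 0 then r else k)
      (if l = 0 then j - 1 else j) (if l = 0 then r else l)

/-- The jump `[w]^x_{i,k;j,l} = w_{i,k;j,l} − w_{i,k−1;j,l}`. -/
def jumpX (r : ℕ) (w : ℕ → ℕ → ℕ → ℕ → ℝ) (i k j l : ℕ) : ℝ :=
  wE r w i k j l - wE r w i (k - 1) j l

/-- The jump `[w]^y_{i,k;j,l} = w_{i,k;j,l} − w_{i,k;j,l−1}`. -/
def jumpY (r : ℕ) (w : ℕ → ℕ → ℕ → ℕ → ℝ) (i k j l : ℕ) : ℝ :=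
  wE r w i k j l - wE r w i k j (l - 1)

/-- The double jump `⌊w⌋_{i,k;j,l}`. -/
def jumpXY (r : ℕ) (w : ℕ → ℕ → ℕ → ℕ → ℝ) (i k j l : ℕ) : ℝ :=
  wE r w i k j l - wE r w i (k - 1) j l - wE r w i k j (l - 1) + wE r w i (k - 1) j (l - 1)

/-- A test function: coefficients `w_{i,k;j,l}`, `1 ≤ i ≤ m`, `1 ≤ k ≤ r`,
`1 ≤ j ≤ n`, `1 ≤ l ≤ r`, vanishing for `(i,k) = (m,r)` or `(j,l) = (n,r)`. -/
def IsTestFun {a b c d : ℝ} (r : ℕ) (P : RectPartition a b c d)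
    (w : ℕ → ℕ → ℕ → ℕ → ℝ) : Prop :=
  (∀ j ∈ Finset.Icc 1 P.n, ∀ l ∈ Finset.Icc 1 r, w P.m r j l = 0) ∧
  (∀ i ∈ Finset.Icc 1 P.m, ∀ k ∈ Finset.Icc 1 r, w i k P.n r = 0)

/-- The index set `X`: quadruples `(i,k,j,l)` with `(j,l) ≠ (n,r)`. -/
def idxX {a b c d : ℝ} (r : ℕ) (P : RectPartition a b c d) : Finset (ℕ × ℕ × ℕ × ℕ) :=
  (Finset.Icc 1 P.m ×ˢ Finset.Icc 1 r ×ˢ Finset.Icc 1 P.n ×ˢ Finset.Icc 1 r).filter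
    fun q => ¬(q.2.2.1 = P.n ∧ q.2.2.2 = r)

/-- The index set `Y`: quadruples `(i,k,j,l)` with `(i,k) ≠ (m,r)`. -/
def idxY {a b c d : ℝ} (r : ℕ) (P : RectPartition a b c d) : Finset (ℕ × ℕ × ℕ × ℕ) :=
  (Finset.Icc 1 P.m ×ˢ Finset.Icc 1 r ×ˢ Finset.Icc 1 P.n ×ˢ Finset.Icc 1 r).filter
    fun q => ¬(q.1 = P.m ∧ q.2.1 = r)

/-- The index set of interior dual volumes: `(i,k) ≠ (m,r)` and `(j,l) ≠ (n,r)`. -/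
def idxZ {a b c d : ℝ} (r : ℕ) (P : RectPartition a b c d) : Finset (ℕ × ℕ × ℕ × ℕ) :=
  (Finset.Icc 1 P.m ×ˢ Finset.Icc 1 r ×ˢ Finset.Icc 1 P.n ×ˢ Finset.Icc 1 r).filter
    fun q => ¬(q.1 = P.m ∧ q.2.1 = r) ∧ ¬(q.2.2.1 = P.n ∧ q.2.2.2 = r)

/-- The dual-mesh seminorm `|w|_{P'}`. -/
def dualSemi {a b c d : ℝ} (r : ℕ) (P : RectPartition a b c d)
    (w : ℕ → ℕ → ℕ → ℕ → ℝ) : ℝ :=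
  Real.sqrt
    ((∑ q ∈ idxX r P, (jumpX r w q.1 q.2.1 q.2.2.1 q.2.2.2) ^ 2) +
     (∑ q ∈ idxY r P, (jumpY r w q.1 q.2.1 q.2.2.1 q.2.2.2) ^ 2))

/-- The FVM bilinear form `a_P(v, w)`, with the cellwise derivatives of `v`
given by `Dxv i j` and `Dyv i j` on cell `(i,j)`.  The integrals along Gauss
lines are split at the cell interfaces `y = y_j` (resp. `x = x_i`), which only
matters for the last Gauss subinterval `l = r` (resp. `k = r`). -/
def aP {a b c d : ℝ} (r : ℕ) (G : ℕ → ℝ) (P : RectPartition a b c d)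
    (α : ℝ × ℝ → ℝ) (Dxv Dyv : ℕ → ℕ → ℝ × ℝ → ℝ) (w : ℕ → ℕ → ℕ → ℕ → ℝ) : ℝ :=
  (∑ q ∈ idxX r P,
    jumpX r w q.1 q.2.1 q.2.2.1 q.2.2.2 *
      ((∫ t in (P.gy r G q.2.2.1 q.2.2.2)..(min (P.gy r G q.2.2.1 (q.2.2.2 + 1)) (P.y q.2.2.1)),
          α (P.gx r G q.1 q.2.1, t) * Dxv q.1 q.2.2.1 (P.gx r G q.1 q.2.1, t)) +
       (∫ t in (P.y q.2.2.1)..(max (P.gy r G q.2.2.1 (q.2.2.2 + 1)) (P.y q.2.2.1)),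
          α (P.gx r G q.1 q.2.1, t) * Dxv q.1 (q.2.2.1 + 1) (P.gx r G q.1 q.2.1, t)))) +
  (∑ q ∈ idxY r P,
    jumpY r w q.1 q.2.1 q.2.2.1 q.2.2.2 *
      ((∫ t in (P.gx r G q.1 q.2.1)..(min (P.gx r G q.1 (q.2.1 + 1)) (P.x q.1)),
          α (t, P.gy r G q.2.2.1 q.2.2.2) * Dyv q.1 q.2.2.1 (t, P.gy r G q.2.2.1 q.2.2.2)) +
       (∫ t in (P.x q.1)..(max (P.gx r G q.1 (q.2.1 + 1)) (P.x q.1)),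
          α (t, P.gy r G q.2.2.1 q.2.2.2) * Dyv (q.1 + 1) q.2.2.1 (t, P.gy r G q.2.2.1 q.2.2.2))))

/-- The broken `H¹` seminorm `|v|₁` computed cellwise. -/
def semiH1 {a b c d : ℝ} (P : RectPartition a b c d) (v : PiecewiseFun P) : ℝ :=
  Real.sqrt (∑ i ∈ Finset.Icc 1 P.m, ∑ j ∈ Finset.Icc 1 P.n,
    ∫ z in P.cell i j, ((cellDx v i j z) ^ 2 + (cellDy v i j z) ^ 2))

/-- The mesh-dependent seminorm `|v|_P` (broken `H²`-type seminorm). -/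
def semiP {a b c d : ℝ} (P : RectPartition a b c d) (v : PiecewiseFun P) : ℝ :=
  Real.sqrt (∑ i ∈ Finset.Icc 1 P.m, ∑ j ∈ Finset.Icc 1 P.n,
    ((∫ z in P.cell i j, ((cellDx v i j z) ^ 2 + (cellDy v i j z) ^ 2)) +
      (P.hx i ^ 2 + P.hy j ^ 2) *
        ∫ z in P.cell i j,
          ((pdx (pdx (v.cellFun i j)) z) ^ 2 + 2 * (pdy (pdx (v.cellFun i j)) z) ^ 2 +
            (pdy (pdy (v.cellFun i j)) z) ^ 2)))

/-- The broken seminorm `|u|_{s,P}`. -/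
def brokenSemi {a b c d : ℝ} (P : RectPartition a b c d) (u : PiecewiseFun P) (s : ℕ) : ℝ :=
  Real.sqrt (∑ i ∈ Finset.Icc 1 P.m, ∑ j ∈ Finset.Icc 1 P.n, ∑ t ∈ Finset.range (s + 1),
    ∫ z in P.cell i j, (pdx^[t] (pdy^[s - t] (u.cellFun i j)) z) ^ 2)

/-- The broken norm `‖u‖_{s,P} = (Σ_{t=0}^{s} |u|_{t,P}²)^{1/2}`. -/
def brokenNorm {a b c d : ℝ} (P : RectPartition a b c d) (u : PiecewiseFun P) (s : ℕ) : ℝ :=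
  Real.sqrt (∑ t ∈ Finset.range (s + 1), (brokenSemi P u t) ^ 2)

/-- `w = Πv`: the test function determined by the double-jump constraints
`⌊Πv⌋_{i,k;j,l} = A^x_{i,k} A^y_{j,l} ∂²v/∂x∂y(g^x_{i,k}, g^y_{j,l})`. -/
def IsPiOf {a b c d : ℝ} (r : ℕ) (G A : ℕ → ℝ) (P : RectPartition a b c d)
    (v : PiecewiseFun P) (w : ℕ → ℕ → ℕ → ℕ → ℝ) : Prop :=
  IsTestFun r P w ∧
  ∀ i ∈ Finset.Icc 1 P.m, ∀ k ∈ Finset.Icc 1 r, ∀ j ∈ Finset.Icc 1 P.n, ∀ l ∈ Finset.Icc 1 r,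
    ¬(i = P.m ∧ k = r) → ¬(j = P.n ∧ l = r) →
    jumpXY r w i k j l =
      (P.hx i * A k / 2) * (P.hy j * A l / 2) *
        pdy (pdx (v.cellFun i j)) (P.gx r G i k, P.gy r G j l)

/-- `α` is piecewise constant with respect to `P`. -/
def PiecewiseConstant {a b c d : ℝ} (P : RectPartition a b c d) (α : ℝ × ℝ → ℝ) : Prop :=
  ∀ i ∈ Finset.Icc 1 P.m, ∀ j ∈ Finset.Icc 1 P.n, ∃ cst : ℝ, ∀ z ∈ P.openCell i j, α z = cst

/-- The cellwise fluxes `α ∂u/∂x`, `α ∂u/∂y` extend continuously to `Ω`. -/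
def FluxContinuous {a b c d : ℝ} (P : RectPartition a b c d) (α : ℝ × ℝ → ℝ)
    (u : PiecewiseFun P) : Prop :=
  ∃ Fx Fy : ℝ × ℝ → ℝ, ContinuousOn Fx P.dom ∧ ContinuousOn Fy P.dom ∧
    ∀ i ∈ Finset.Icc 1 P.m, ∀ j ∈ Finset.Icc 1 P.n, ∀ z ∈ P.openCell i j,
      Fx z = α z * cellDx u i j z ∧ Fy z = α z * cellDy u i j z

/-- The iterated integral of `f` over the rectangle `[x₁,x₂] × [y₁,y₂]`. -/
def rectInt (f : ℝ × ℝ → ℝ) (x₁ x₂ y₁ y₂ : ℝ) : ℝ :=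
  ∫ s in x₁..x₂, ∫ t in y₁..y₂, f (s, t)

/-- The integral over the dual volume `τ'_{i,k;j,l} = [g^x_{i,k}, g^x_{i,k+1}] ×
[g^y_{j,l}, g^y_{j,l+1}]` of a cellwise-defined integrand `F i j`, split along
the cell interfaces `x = x_i` and `y = y_j`. -/
def dualCellInt {a b c d : ℝ} (r : ℕ) (G : ℕ → ℝ) (P : RectPartition a b c d)
    (F : ℕ → ℕ → ℝ × ℝ → ℝ) (i k j l : ℕ) : ℝ :=
  rectInt (F i j) (P.gx r G i k) (min (P.gx r G i (k + 1)) (P.x i))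
    (P.gy r G j l) (min (P.gy r G j (l + 1)) (P.y j)) +
  rectInt (F (i + 1) j) (P.x i) (max (P.gx r G i (k + 1)) (P.x i))
    (P.gy r G j l) (min (P.gy r G j (l + 1)) (P.y j)) +
  rectInt (F i (j + 1)) (P.gx r G i k) (min (P.gx r G i (k + 1)) (P.x i))
    (P.y j) (max (P.gy r G j (l + 1)) (P.y j)) +
  rectInt (F (i + 1) (j + 1)) (P.x i) (max (P.gx r G i (k + 1)) (P.x i))
    (P.y j) (max (P.gy r G j (l + 1)) (P.y j))

/-- The cellwise source term `f = −α (∂²u/∂x² + ∂²u/∂y²)` (for piecewise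
constant `α`). -/
def cellSource {a b c d : ℝ} {P : RectPartition a b c d} (α : ℝ × ℝ → ℝ)
    (u : PiecewiseFun P) (i j : ℕ) (z : ℝ × ℝ) : ℝ :=
  -(α z * (pdx (pdx (u.cellFun i j)) z + pdy (pdy (u.cellFun i j)) z))

/-- The right-hand side `Σ w_{i,k;j,l} ∫_{τ'_{i,k;j,l}} f` of the FV scheme. -/
def fvRHS {a b c d : ℝ} (r : ℕ) (G : ℕ → ℝ) (P : RectPartition a b c d)
    (α : ℝ × ℝ → ℝ) (u : PiecewiseFun P) (w : ℕ → ℕ → ℕ → ℕ → ℝ) : ℝ :=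
  ∑ q ∈ idxZ r P, w q.1 q.2.1 q.2.2.1 q.2.2.2 *
    dualCellInt r G P (cellSource α u) q.1 q.2.1 q.2.2.1 q.2.2.2

/-- `uP` is a finite volume solution for the exact solution `u`. -/
def IsFVSolution {a b c d : ℝ} (r : ℕ) (G : ℕ → ℝ) (P : RectPartition a b c d)
    (α : ℝ × ℝ → ℝ) (u uP : PiecewiseFun P) : Prop :=
  IsTrialFun r P uP ∧
  ∀ w, IsTestFun r P w → aP r G P α (cellDx uP) (cellDy uP) w = fvRHS r G P α u w

/-- The Lobatto node in cell `(i,j)` with 0-based indices `0 ≤ k, l ≤ r`. -/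
def lobattoNode {a b c d : ℝ} (P : RectPartition a b c d) (L : ℕ → ℝ)
    (i j k l : ℕ) : ℝ × ℝ :=
  ((P.x (i - 1) + P.x i + P.hx i * L k) / 2, (P.y (j - 1) + P.y j + P.hy j * L l) / 2)

/-- `uI` is the Lobatto interpolant of `u` in the trial space `U_P^r`. -/
def IsLobattoInterp {a b c d : ℝ} (r : ℕ) (L : ℕ → ℝ) (P : RectPartition a b c d)
    (u : ℝ × ℝ → ℝ) (uI : PiecewiseFun P) : Prop :=
  IsTrialFun r P uI ∧
  ∀ i ∈ Finset.Icc 1 P.m, ∀ j ∈ Finset.Icc 1 P.n,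
    ∀ k ∈ Finset.Icc 0 r, ∀ l ∈ Finset.Icc 0 r,
      uI.toFun (lobattoNode P L i j k l) = u (lobattoNode P L i j k l)

/-- The piecewise oscillation `osc_P(α)`: the maximum over all cells of
`ess sup α − ess inf α`. -/
def oscP {a b c d : ℝ} (P : RectPartition a b c d) (α : ℝ × ℝ → ℝ) : ℝ :=
  (Finset.Icc 1 P.m ×ˢ Finset.Icc 1 P.n).sup'
    (Finset.Nonempty.product (Finset.nonempty_Icc.mpr P.hm) (Finset.nonempty_Icc.mpr P.hn))
    fun p => essSup α (volume.restrict (P.cell p.1 p.2)) -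
      essInf α (volume.restrict (P.cell p.1 p.2))

end


section FVMExactnessHelpers

open MeasureTheory intervalIntegral Set

private lemma fvm_tele (m : ℕ) (a : ℕ → ℝ) (h0 : a 0 = 0) :
    ∑ i ∈ Finset.Icc 1 m, (a i - a (i-1)) = a m := by
  induction m with
  | zero => simp [h0]
  | succ m ih =>
    rw [Finset.sum_Icc_succ_top (by omega)]
    rcases Nat.eq_zero_or_pos m with h | h
    · subst h; simp [h0]
    · rw [ih]
      have : m + 1 - 1 = m := by omega
      rw [this]; ring

private lemma fvm_abel2 (m r : ℕ) (hm : 1 ≤ m) (hr : 1 ≤ r) (W V : ℕ → ℕ → ℝ)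
    (hWmr : W m r = 0)
    (hVr : ∀ i, 1 ≤ i → i < m → V i (r+1) = V (i+1) 1) :
    ∑ i ∈ Finset.Icc 1 m, ∑ k ∈ Finset.Icc 1 r,
      (if ¬(i = m ∧ k = r) then W i k * (V i k - V i (k+1)) else 0)
    = ∑ i ∈ Finset.Icc 1 m, ∑ k ∈ Finset.Icc 1 r,
      (W i k - (if k = 1 then (if i = 1 then 0 else W (i-1) r) else W i (k-1))) * V i k := by
  have step1 : ∀ i ∈ Finset.Icc 1 m, ∀ k ∈ Finset.Icc 1 r,
      (if ¬(i = m ∧ k = r) then W i k * (V i k - V i (k+1)) else 0)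
      = W i k * V i k - W i k * (if k = r then V (i+1) 1 else V i (k+1)) := by
    intro i hi k hk
    simp only [Finset.mem_Icc] at hi hk
    by_cases hmr : i = m ∧ k = r
    · obtain ⟨h1, h2⟩ := hmr; subst h1; subst h2; simp [hWmr]
    · rw [if_pos hmr]
      by_cases hkr : k = r
      · subst hkr
        have him : i < m := by rcases Nat.lt_or_ge i m with h | h; exact h; omega
        rw [if_pos rfl, hVr i hi.1 him]; ring
      · rw [if_neg hkr]; ring
  rw [Finset.sum_congr rfl (fun i hi => Finset.sum_congr rfl (step1 i hi))]
  have expand : ∀ i ∈ Finset.Icc 1 m, ∀ k ∈ Finset.Icc 1 r,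
      (W i k - (if k = 1 then (if i = 1 then 0 else W (i-1) r) else W i (k-1))) * V i k
      = W i k * V i k - (if k = 1 then (if i = 1 then 0 else W (i-1) r) else W i (k-1)) * V i k :=
    fun _ _ _ _ => by ring
  rw [Finset.sum_congr rfl (fun i hi => Finset.sum_congr rfl (expand i hi))]
  simp only [Finset.sum_sub_distrib]
  congr 1
  have lhs_i : ∀ i : ℕ, ∑ k ∈ Finset.Icc 1 r, W i k * (if k = r then V (i+1) 1 else V i (k+1))
      = (∑ k ∈ Finset.Icc 1 (r-1), W i k * V i (k+1)) + W i r * V (i+1) 1 := by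
    intro i
    have h : r = (r - 1) + 1 := by omega
    rw [h, Finset.sum_Icc_succ_top (by omega), ← h]
    simp only [if_pos rfl]
    congr 1
    apply Finset.sum_congr rfl
    intro k hk
    simp only [Finset.mem_Icc] at hk
    rw [if_neg (by omega)]
  have rhs_i : ∀ i : ℕ, ∑ k ∈ Finset.Icc 1 r,
      (if k = 1 then (if i = 1 then 0 else W (i-1) r) else W i (k-1)) * V i k
      = (if i = 1 then 0 else W (i-1) r) * V i 1 + ∑ k ∈ Finset.Icc 1 (r-1), W i k * V i (k+1) := by
    intro i
    have h : Finset.Icc 1 r = insert 1 (Finset.Icc 2 r) := by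
      ext k; simp [Finset.mem_Icc, Finset.mem_insert]; omega
    rw [h, Finset.sum_insert (by simp), if_pos rfl]
    congr 1
    rw [show (∑ k ∈ Finset.Icc 1 (r-1), W i k * V i (k+1))
        = ∑ k ∈ Finset.Icc 2 r, W i (k-1) * V i (k-1+1) from ?_]
    · apply Finset.sum_congr rfl
      intro k hk
      simp only [Finset.mem_Icc] at hk
      rw [if_neg (by omega)]
      congr 2
      omega
    · symm
      apply Finset.sum_bij' (fun k _ => k - 1) (fun k _ => k + 1) <;>
        (intros; simp_all [Finset.mem_Icc]) <;> omega
  rw [Finset.sum_congr rfl (fun i _ => lhs_i i), Finset.sum_congr rfl (fun i _ => rhs_i i)]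
  simp only [Finset.sum_add_distrib]
  rw [add_comm]
  congr 1
  have key : ∑ i ∈ Finset.Icc 1 m, (W i r * V (i+1) 1 - (if i = 1 then 0 else W (i-1) r) * V i 1)
      = 0 := by
    have := fvm_tele m (fun i => if i = 0 then 0 else W i r * V (i+1) 1) (by simp)
    rw [Finset.sum_congr rfl (fun i hi => ?_), this, if_neg (by omega), hWmr]
    · ring
    · simp only [Finset.mem_Icc] at hi
      have h1 : i ≠ 0 := by omega
      rw [if_neg h1]
      congr 1
      by_cases h2 : i = 1
      · subst h2; simp
      · rw [if_neg h2, if_neg (by omega)]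
        congr 2
        omega
  have hsub := Finset.sum_sub_distrib (s := Finset.Icc 1 m)
    (f := fun i => W i r * V (i+1) 1) (g := fun i => (if i = 1 then 0 else W (i-1) r) * V i 1)
  rw [hsub] at key
  linarith [key]

private lemma fvm_jumpX_eq (r : ℕ) (w : ℕ → ℕ → ℕ → ℕ → ℝ) (i k j l : ℕ)
    (hk : 1 ≤ k) (hl : 1 ≤ l) :
    jumpX r w i k j l
    = w i k j l - (if k = 1 then (if i = 1 then 0 else w (i-1) r j l) else w i (k-1) j l) := by
  have hk0 : k ≠ 0 := by omega
  have hl0 : l ≠ 0 := by omega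
  unfold jumpX wE
  by_cases hk1 : k = 1
  · subst hk1
    by_cases hi : i = 1 <;> simp [hi, hl0]
  · have h2 : k - 1 ≠ 0 := by omega
    simp [hk0, hl0, h2, hk1]

private lemma fvm_jumpY_eq (r : ℕ) (w : ℕ → ℕ → ℕ → ℕ → ℝ) (i k j l : ℕ)
    (hk : 1 ≤ k) (hl : 1 ≤ l) :
    jumpY r w i k j l
    = w i k j l - (if l = 1 then (if j = 1 then 0 else w i k (j-1) r) else w i k j (l-1)) := by
  have hk0 : k ≠ 0 := by omega
  have hl0 : l ≠ 0 := by omega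
  unfold jumpY wE
  by_cases hl1 : l = 1
  · subst hl1
    by_cases hj : j = 1 <;> simp [hj, hk0]
  · have h2 : l - 1 ≠ 0 := by omega
    simp [hk0, hl0, h2, hl1]

private lemma fvm_sum4_swap (A B C D : Finset ℕ) (g : ℕ → ℕ → ℕ → ℕ → ℝ) :
    ∑ i ∈ A, ∑ k ∈ B, ∑ j ∈ C, ∑ l ∈ D, g i k j l
    = ∑ j ∈ C, ∑ l ∈ D, ∑ i ∈ A, ∑ k ∈ B, g i k j l := by
  calc ∑ i ∈ A, ∑ k ∈ B, ∑ j ∈ C, ∑ l ∈ D, g i k j l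
      = ∑ i ∈ A, ∑ j ∈ C, ∑ k ∈ B, ∑ l ∈ D, g i k j l :=
        Finset.sum_congr rfl (fun i _ => Finset.sum_comm)
    _ = ∑ j ∈ C, ∑ i ∈ A, ∑ k ∈ B, ∑ l ∈ D, g i k j l := Finset.sum_comm
    _ = ∑ j ∈ C, ∑ i ∈ A, ∑ l ∈ D, ∑ k ∈ B, g i k j l :=
        Finset.sum_congr rfl (fun j _ => Finset.sum_congr rfl (fun i _ => Finset.sum_comm))
    _ = ∑ j ∈ C, ∑ l ∈ D, ∑ i ∈ A, ∑ k ∈ B, g i k j l :=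
        Finset.sum_congr rfl (fun j _ => Finset.sum_comm)

private lemma fvm_green (F H : ℝ × ℝ → ℝ) (hF : ContDiff ℝ 1 F) (hH : ContDiff ℝ 1 H)
    (x₁ x₂ y₁ y₂ : ℝ) :
    (∫ s in x₁..x₂, ∫ t in y₁..y₂, -(pdx F (s, t) + pdy H (s, t)))
    = ((∫ t in y₁..y₂, F (x₁, t)) - ∫ t in y₁..y₂, F (x₂, t))
      + ((∫ s in x₁..x₂, H (s, y₁)) - ∫ s in x₁..x₂, H (s, y₂)) := by
  have hdiv := integral2_divergence_prod_of_hasFDerivAt_off_countable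
    F H (fun z => fderiv ℝ F z) (fun z => fderiv ℝ H z) x₁ y₁ x₂ y₂ ∅ Set.countable_empty
    (hF.continuous.continuousOn) (hH.continuous.continuousOn)
    (fun z _ => (hF.differentiable one_ne_zero z).hasFDerivAt)
    (fun z _ => (hH.differentiable one_ne_zero z).hasFDerivAt)
    (ContinuousOn.integrableOn_compact (isCompact_uIcc.prod isCompact_uIcc)
      (((((hF.continuous_fderiv one_ne_zero).clm_apply continuous_const).add
      ((hH.continuous_fderiv one_ne_zero).clm_apply continuous_const))).continuousOn))
  have heq : (∫ s in x₁..x₂, ∫ t in y₁..y₂, -(pdx F (s, t) + pdy H (s, t)))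
      = -(∫ s in x₁..x₂, ∫ t in y₁..y₂, (fderiv ℝ F (s,t)) (1,0) + (fderiv ℝ H (s,t)) (0,1)) := by
    rw [← intervalIntegral.integral_neg]
    apply intervalIntegral.integral_congr
    intro s _
    simp only [← intervalIntegral.integral_neg]
    rfl
  rw [heq, hdiv]
  ring

end FVMExactnessHelpers

/-- Variational exactness of the FVM bilinear form: if `α` is `C¹`, `u` is `C²`
and vanishes on `∂Ω`, and `f = −∂x(α ∂u/∂x) − ∂y(α ∂u/∂y)`, then for every test
function `w`, `a_P(u, w) = Σ_{(i,k;j,l)} w_{i,k;j,l} ∫_{τ'_{i,k;j,l}} f`. -/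
theorem fvm_variational_exactness (r : ℕ) (hr : 1 ≤ r) (G : ℕ → ℝ)
    (hG : IsGaussPoints r G) {a b c d : ℝ} (hab : a < b) (hcd : c < d)
    (P : RectPartition a b c d)
    (α : ℝ × ℝ → ℝ) (hα : ContDiff ℝ 1 α)
    (u : ℝ × ℝ → ℝ) (hu : ContDiff ℝ 2 u) (hub : ∀ z ∈ P.bdry, u z = 0)
    (f : ℝ × ℝ → ℝ)
    (hf : ∀ z, f z = -(pdx (fun z' => α z' * pdx u z') z +
                        pdy (fun z' => α z' * pdy u z') z))
    (w : ℕ → ℕ → ℕ → ℕ → ℝ) (hw : IsTestFun r P w) :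
    aP r G P α (fun _ _ => pdx u) (fun _ _ => pdy u) w =
      ∑ q ∈ idxZ r P, w q.1 q.2.1 q.2.2.1 q.2.2.2 *
        rectInt f (P.gx r G q.1 q.2.1) (P.gx r G q.1 (q.2.1 + 1))
          (P.gy r G q.2.2.1 q.2.2.2) (P.gy r G q.2.2.1 (q.2.2.2 + 1)) := by
  classical
  obtain ⟨hGmono, hGprop⟩ := hG
  -- smoothness of partial derivatives and fluxes
  have hpdxu : ContDiff ℝ 1 (pdx u) := by
    have h1 : ContDiff ℝ 1 (fderiv ℝ u) := hu.fderiv_right (by norm_num)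
    exact h1.clm_apply contDiff_const
  have hpdyu : ContDiff ℝ 1 (pdy u) := by
    have h1 : ContDiff ℝ 1 (fderiv ℝ u) := hu.fderiv_right (by norm_num)
    exact h1.clm_apply contDiff_const
  set F : ℝ × ℝ → ℝ := fun z => α z * pdx u z with hFdef
  set Hy : ℝ × ℝ → ℝ := fun z => α z * pdy u z with hHydef
  have hFc : ContDiff ℝ 1 F := hα.mul hpdxu
  have hHyc : ContDiff ℝ 1 Hy := hα.mul hpdyu
  -- interval integrability along lines
  have hFint : ∀ (x0 y1 y2 : ℝ), IntervalIntegrable (fun t => F (x0, t)) volume y1 y2 :=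
    fun x0 y1 y2 => (hFc.continuous.comp (Continuous.prodMk_right x0)).intervalIntegrable y1 y2
  have hHyint : ∀ (y0 x1 x2 : ℝ), IntervalIntegrable (fun s => Hy (s, y0)) volume x1 x2 :=
    fun y0 x1 x2 =>
      (hHyc.continuous.comp (Continuous.prodMk_left y0)).intervalIntegrable x1 x2
  -- Gauss point locations
  have hGmem : ∀ k, 1 ≤ k → k ≤ r → -1 < G k ∧ G k < 1 :=
    fun k h1 h2 => ⟨(hGprop k h1 h2).1.1, (hGprop k h1 h2).1.2⟩
  have hxmono : ∀ i, 1 ≤ i → i ≤ P.m → P.x (i-1) < P.x i := by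
    intro i h1 h2
    have := P.hxlt (i-1) (by omega)
    rwa [show i - 1 + 1 = i by omega] at this
  have hymono : ∀ j, 1 ≤ j → j ≤ P.n → P.y (j-1) < P.y j := by
    intro j h1 h2
    have := P.hylt (j-1) (by omega)
    rwa [show j - 1 + 1 = j by omega] at this
  have hgx : ∀ i k, 1 ≤ i → i ≤ P.m → 1 ≤ k → k ≤ r →
      P.x (i-1) < P.gx r G i k ∧ P.gx r G i k < P.x i := by
    intro i k h1 h2 h3 h4
    have hx := hxmono i h1 h2
    have hGk := hGmem k h3 h4
    rw [RectPartition.gx, if_neg (by omega)]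
    unfold RectPartition.hx
    constructor <;> nlinarith [hGk.1, hGk.2]
  have hgy : ∀ j l, 1 ≤ j → j ≤ P.n → 1 ≤ l → l ≤ r →
      P.y (j-1) < P.gy r G j l ∧ P.gy r G j l < P.y j := by
    intro j l h1 h2 h3 h4
    have hy := hymono j h1 h2
    have hGl := hGmem l h3 h4
    rw [RectPartition.gy, if_neg (by omega)]
    unfold RectPartition.hy
    constructor <;> nlinarith [hGl.1, hGl.2]
  have hgxsucc : ∀ i, 1 ≤ i → i < P.m → P.gx r G i (r+1) = P.gx r G (i+1) 1 := by
    intro i h1 h2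
    rw [RectPartition.gx, if_pos rfl, if_neg (by omega),
        RectPartition.gx, if_neg (by omega)]
    norm_num
  have hgysucc : ∀ j, 1 ≤ j → j < P.n → P.gy r G j (r+1) = P.gy r G (j+1) 1 := by
    intro j h1 h2
    rw [RectPartition.gy, if_pos rfl, if_neg (by omega),
        RectPartition.gy, if_neg (by omega)]
    norm_num
  have hgxlast : P.gx r G P.m (r+1) = P.x P.m := by
    rw [RectPartition.gx, if_pos rfl, if_pos rfl]
  have hgylast : P.gy r G P.n (r+1) = P.y P.n := by
    rw [RectPartition.gy, if_pos rfl, if_pos rfl]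
  -- the line integrals
  set V : ℕ → ℕ → ℕ → ℕ → ℝ := fun i k j l =>
    ∫ t in (P.gy r G j l)..(P.gy r G j (l+1)), F (P.gx r G i k, t) with hVdef
  set Hh : ℕ → ℕ → ℕ → ℕ → ℝ := fun i k j l =>
    ∫ s in (P.gx r G i k)..(P.gx r G i (k+1)), Hy (s, P.gy r G j l) with hHhdef
  -- Step 1 : simplify aP
  have lhs_eq : aP r G P α (fun _ _ => pdx u) (fun _ _ => pdy u) w
      = (∑ q ∈ idxX r P, jumpX r w q.1 q.2.1 q.2.2.1 q.2.2.2 * V q.1 q.2.1 q.2.2.1 q.2.2.2)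
      + (∑ q ∈ idxY r P, jumpY r w q.1 q.2.1 q.2.2.1 q.2.2.2 * Hh q.1 q.2.1 q.2.2.1 q.2.2.2) := by
    rw [aP]
    congr 1
    · apply Finset.sum_congr rfl
      rintro ⟨i, k, j, l⟩ hq
      simp only [idxX, Finset.mem_filter, Finset.mem_product, Finset.mem_Icc] at hq
      obtain ⟨⟨⟨hi1, hi2⟩, ⟨hk1, hk2⟩, ⟨hj1, hj2⟩, hl1, hl2⟩, hcond⟩ := hq
      congr 1
      simp only [hVdef, hFdef]
      by_cases hlr : l = r
      · rw [hlr]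
        have hjn : j < P.n := by
          rcases Nat.lt_or_ge j P.n with h | h
          · exact h
          · exact absurd ⟨by omega, hlr⟩ hcond
        have hlt : P.y j < P.gy r G j (r+1) := by
          rw [hgysucc j hj1 hjn]
          have h2 := (hgy (j+1) 1 (by omega) (by omega) le_rfl hr).1
          simpa using h2
        rw [min_eq_right hlt.le, max_eq_left hlt.le]
        exact intervalIntegral.integral_add_adjacent_intervals
          (hFint (P.gx r G i k) _ _) (hFint (P.gx r G i k) _ _)
      · have hlt : P.gy r G j (l+1) < P.y j :=
          (hgy j (l+1) hj1 hj2 (by omega) (by omega)).2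
        rw [min_eq_left hlt.le, max_eq_right hlt.le, intervalIntegral.integral_same, add_zero]
    · apply Finset.sum_congr rfl
      rintro ⟨i, k, j, l⟩ hq
      simp only [idxY, Finset.mem_filter, Finset.mem_product, Finset.mem_Icc] at hq
      obtain ⟨⟨⟨hi1, hi2⟩, ⟨hk1, hk2⟩, ⟨hj1, hj2⟩, hl1, hl2⟩, hcond⟩ := hq
      congr 1
      simp only [hHhdef, hHydef]
      by_cases hkr : k = r
      · rw [hkr]
        have him : i < P.m := by
          rcases Nat.lt_or_ge i P.m with h | h
          · exact h
          · exact absurd ⟨by omega, hkr⟩ hcond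
        have hlt : P.x i < P.gx r G i (r+1) := by
          rw [hgxsucc i hi1 him]
          have h2 := (hgx (i+1) 1 (by omega) (by omega) le_rfl hr).1
          simpa using h2
        rw [min_eq_right hlt.le, max_eq_left hlt.le]
        exact intervalIntegral.integral_add_adjacent_intervals
          (hHyint (P.gy r G j l) _ _) (hHyint (P.gy r G j l) _ _)
      · have hlt : P.gx r G i (k+1) < P.x i :=
          (hgx i (k+1) hi1 hi2 (by omega) (by omega)).2
        rw [min_eq_left hlt.le, max_eq_right hlt.le, intervalIntegral.integral_same, add_zero]
  -- Step 2 : Green's theorem on each dual cell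
  have green' : ∀ i k j l : ℕ,
      rectInt f (P.gx r G i k) (P.gx r G i (k+1)) (P.gy r G j l) (P.gy r G j (l+1))
      = (V i k j l - V i (k+1) j l) + (Hh i k j l - Hh i k j (l+1)) := by
    intro i k j l
    have hg := fvm_green F Hy hFc hHyc (P.gx r G i k) (P.gx r G i (k+1))
      (P.gy r G j l) (P.gy r G j (l+1))
    rw [rectInt]
    have hcongr : (∫ s in (P.gx r G i k)..(P.gx r G i (k+1)),
          ∫ t in (P.gy r G j l)..(P.gy r G j (l+1)), f (s, t))
        = ∫ s in (P.gx r G i k)..(P.gx r G i (k+1)),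
          ∫ t in (P.gy r G j l)..(P.gy r G j (l+1)), -(pdx F (s, t) + pdy Hy (s, t)) := by
      apply intervalIntegral.integral_congr
      intro s _
      apply intervalIntegral.integral_congr
      intro t _
      exact hf (s, t)
    rw [hcongr, hg]
  rw [lhs_eq]
  rw [Finset.sum_congr rfl (fun q (_ : q ∈ idxZ r P) => by
    rw [green' q.1 q.2.1 q.2.2.1 q.2.2.2])]
  simp only [mul_add]
  rw [Finset.sum_add_distrib]
  congr 1
  -- Claim X
  · simp only [idxX, idxZ, Finset.sum_filter, Finset.sum_product]
    conv_lhs => rw [fvm_sum4_swap]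
    conv_rhs => rw [fvm_sum4_swap]
    apply Finset.sum_congr rfl; intro j hj
    apply Finset.sum_congr rfl; intro l hl
    simp only [Finset.mem_Icc] at hj hl
    by_cases hnr : j = P.n ∧ l = r
    · rw [Finset.sum_congr rfl (fun i (_ : i ∈ Finset.Icc 1 P.m) =>
        Finset.sum_congr rfl (fun k (_ : k ∈ Finset.Icc 1 r) => if_neg (not_not_intro hnr))),
        Finset.sum_congr rfl (fun i (_ : i ∈ Finset.Icc 1 P.m) =>
        Finset.sum_congr rfl (fun k (_ : k ∈ Finset.Icc 1 r) =>
          if_neg (fun hc => hc.2 hnr)))]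
    · have habel := fvm_abel2 P.m r P.hm hr (fun i k => w i k j l) (fun i k => V i k j l)
        (hw.1 j (Finset.mem_Icc.mpr ⟨hj.1, hj.2⟩) l (Finset.mem_Icc.mpr ⟨hl.1, hl.2⟩))
        (fun i h1 h2 => by simp only [hVdef]; rw [hgxsucc i h1 h2])
      calc ∑ i ∈ Finset.Icc 1 P.m, ∑ k ∈ Finset.Icc 1 r,
            (if ¬(j = P.n ∧ l = r) then jumpX r w i k j l * V i k j l else 0)
          = ∑ i ∈ Finset.Icc 1 P.m, ∑ k ∈ Finset.Icc 1 r,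
            ((fun i k => w i k j l) i k -
              (if k = 1 then (if i = 1 then 0 else (fun i k => w i k j l) (i-1) r)
                else (fun i k => w i k j l) i (k-1))) * (fun i k => V i k j l) i k := by
            apply Finset.sum_congr rfl; intro i hi
            apply Finset.sum_congr rfl; intro k hk
            simp only [Finset.mem_Icc] at hi hk
            rw [if_pos hnr, fvm_jumpX_eq r w i k j l hk.1 hl.1]
        _ = ∑ i ∈ Finset.Icc 1 P.m, ∑ k ∈ Finset.Icc 1 r,
            (if ¬(i = P.m ∧ k = r) then
              (fun i k => w i k j l) i k *
                ((fun i k => V i k j l) i k - (fun i k => V i k j l) i (k+1)) else 0) :=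
            habel.symm
        _ = ∑ i ∈ Finset.Icc 1 P.m, ∑ k ∈ Finset.Icc 1 r,
            (if ¬(i = P.m ∧ k = r) ∧ ¬(j = P.n ∧ l = r) then
              w i k j l * (V i k j l - V i (k+1) j l) else 0) := by
            apply Finset.sum_congr rfl; intro i _
            apply Finset.sum_congr rfl; intro k _
            rcases Classical.em (¬(i = P.m ∧ k = r)) with h | h
            · rw [if_pos h, if_pos ⟨h, hnr⟩]
            · rw [if_neg h, if_neg (fun hc => h hc.1)]
  -- Claim Y
  · simp only [idxY, idxZ, Finset.sum_filter, Finset.sum_product]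
    apply Finset.sum_congr rfl; intro i hi
    apply Finset.sum_congr rfl; intro k hk
    simp only [Finset.mem_Icc] at hi hk
    by_cases hmr : i = P.m ∧ k = r
    · rw [Finset.sum_congr rfl (fun j (_ : j ∈ Finset.Icc 1 P.n) =>
        Finset.sum_congr rfl (fun l (_ : l ∈ Finset.Icc 1 r) => if_neg (not_not_intro hmr))),
        Finset.sum_congr rfl (fun j (_ : j ∈ Finset.Icc 1 P.n) =>
        Finset.sum_congr rfl (fun l (_ : l ∈ Finset.Icc 1 r) =>
          if_neg (fun hc => hc.1 hmr)))]
    · have habel := fvm_abel2 P.n r P.hn hr (fun j l => w i k j l) (fun j l => Hh i k j l)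
        (hw.2 i (Finset.mem_Icc.mpr ⟨hi.1, hi.2⟩) k (Finset.mem_Icc.mpr ⟨hk.1, hk.2⟩))
        (fun j h1 h2 => by simp only [hHhdef]; rw [hgysucc j h1 h2])
      calc ∑ j ∈ Finset.Icc 1 P.n, ∑ l ∈ Finset.Icc 1 r,
            (if ¬(i = P.m ∧ k = r) then jumpY r w i k j l * Hh i k j l else 0)
          = ∑ j ∈ Finset.Icc 1 P.n, ∑ l ∈ Finset.Icc 1 r,
            ((fun j l => w i k j l) j l -
              (if l = 1 then (if j = 1 then 0 else (fun j l => w i k j l) (j-1) r)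
                else (fun j l => w i k j l) j (l-1))) * (fun j l => Hh i k j l) j l := by
            apply Finset.sum_congr rfl; intro j hj
            apply Finset.sum_congr rfl; intro l hl
            simp only [Finset.mem_Icc] at hj hl
            rw [if_pos hmr, fvm_jumpY_eq r w i k j l hk.1 hl.1]
        _ = ∑ j ∈ Finset.Icc 1 P.n, ∑ l ∈ Finset.Icc 1 r,
            (if ¬(j = P.n ∧ l = r) then
              (fun j l => w i k j l) j l *
                ((fun j l => Hh i k j l) j l - (fun j l => Hh i k j l) j (l+1)) else 0) :=
            habel.symm
        _ = ∑ j ∈ Finset.Icc 1 P.n, ∑ l ∈ Finset.Icc 1 r,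
            (if ¬(i = P.m ∧ k = r) ∧ ¬(j = P.n ∧ l = r) then
              w i k j l * (Hh i k j l - Hh i k j (l+1)) else 0) := by
            apply Finset.sum_congr rfl; intro j _
            apply Finset.sum_congr rfl; intro l _
            rcases Classical.em (¬(j = P.n ∧ l = r)) with h | h
            · rw [if_pos h, if_pos ⟨hmr, h⟩]
            · rw [if_neg (fun hc => h hc), if_neg (fun hc => h hc.2)]
end

section
/- For every integer r ≥ 1 and every σ ≥ 1 there is a constant M_0 > 0 depending only on r and σ such that: for every σ-quasi-uniform rectangular partition P of Ω, every bounded measurable α : Ω → ℝ, every function v : Ω → ℝ that is continuous on Ω, vanishes on ∂Ω, and is C^2 on each closed cell, and every test function w, one has |a_P(v, w)| ≤ M_0 · (sup |α|) · |v|_P · |w|_{P'}. -/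
open Polynomial MeasureTheory

section FVMAux

open intervalIntegral Set


/-- Cauchy–Schwarz for interval integrals of a continuous function. -/
lemma cs_interval (F : ℝ → ℝ) (hF : Continuous F) {s t : ℝ} (hst : s ≤ t) :
    (∫ y in s..t, |F y|) ^ 2 ≤ (t - s) * ∫ y in s..t, (F y) ^ 2 := by
  set I := ∫ y in s..t, |F y| with hI
  set A := ∫ y in s..t, (F y) ^ 2 with hA
  have hAnn : 0 ≤ A := intervalIntegral.integral_nonneg hst fun y _ => sq_nonneg _
  have hInn : 0 ≤ I := intervalIntegral.integral_nonneg hst fun y _ => abs_nonneg _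
  have key : ∀ ε : ℝ, 0 < ε → 2 * ε * I ≤ A + ε ^ 2 * (t - s) := by
    intro ε hε
    have h2ε : (0:ℝ) < 2 * ε := by positivity
    have hmono : I ≤ ∫ y in s..t, ((F y) ^ 2 / (2 * ε) + ε / 2) := by
      apply intervalIntegral.integral_mono_on hst (hF.abs.intervalIntegrable _ _)
        ((((hF.pow 2).div_const (2 * ε)).add continuous_const).intervalIntegrable s t)
      intro y _
      have heq : (F y) ^ 2 / (2 * ε) + ε / 2 = ((F y) ^ 2 + ε ^ 2) / (2 * ε) := by
        field_simp
      show |F y| ≤ (F y) ^ 2 / (2 * ε) + ε / 2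
      rw [heq, le_div_iff₀ h2ε]
      nlinarith [sq_nonneg (|F y| - ε), sq_abs (F y)]
    have heval : (∫ y in s..t, ((F y) ^ 2 / (2 * ε) + ε / 2))
        = A / (2 * ε) + (t - s) * (ε / 2) := by
      rw [intervalIntegral.integral_add (f := fun y => F y ^ 2 / (2 * ε)) (((hF.pow 2).div_const _).intervalIntegrable _ _)
        (intervalIntegrable_const), intervalIntegral.integral_div,
        intervalIntegral.integral_const, smul_eq_mul]
    rw [heval] at hmono
    calc 2 * ε * I ≤ 2 * ε * (A / (2 * ε) + (t - s) * (ε / 2)) :=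
          mul_le_mul_of_nonneg_left hmono h2ε.le
      _ = A + ε ^ 2 * (t - s) := by field_simp
  rcases eq_or_lt_of_le hInn with h0 | hIpos
  · rw [← h0]
    simpa using mul_nonneg (sub_nonneg.2 hst) hAnn
  · have hts : 0 < t - s := by
      rcases eq_or_lt_of_le hst with rfl | h
      · simp [hI] at hIpos
      · linarith
    have hkey := key (I / (t - s)) (div_pos hIpos hts)
    rw [div_pow] at hkey
    have h4 : 2 * (I / (t - s)) * I * (t - s) = 2 * I ^ 2 := by field_simp
    have h5 : (A + I ^ 2 / (t - s) ^ 2 * (t - s)) * (t - s) = A * (t - s) + I ^ 2 := by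
      field_simp
    nlinarith [mul_le_mul_of_nonneg_right hkey hts.le]

/-- One-dimensional trace inequality on `[p,q]` for a `C¹` function. -/
lemma trace1D {f : ℝ → ℝ} (hf : ContDiff ℝ 1 f) {p q g : ℝ} (hpq : p < q)
    (hg : g ∈ Set.Icc p q) :
    (f g) ^ 2 ≤ (2 / (q - p)) * (∫ x in p..q, (f x) ^ 2)
      + (2 * (q - p)) * ∫ x in p..q, (deriv f x) ^ 2 := by
  have hh : 0 < q - p := sub_pos.2 hpq
  have hfc : Continuous f := hf.continuous
  have hf' : Continuous (deriv f) := hf.continuous_deriv le_rfl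
  obtain ⟨t, ht, hmin⟩ := isCompact_Icc.exists_isMinOn (Set.nonempty_Icc.2 hpq.le)
    ((hfc.pow 2).continuousOn)
  have hmin' : (f t) ^ 2 * (q - p) ≤ ∫ x in p..q, (f x) ^ 2 := by
    have h1 : (∫ x in p..q, (f t) ^ 2) ≤ ∫ x in p..q, (f x) ^ 2 :=
      intervalIntegral.integral_mono_on hpq.le intervalIntegrable_const
        ((hfc.pow 2).intervalIntegrable _ _) (fun x hx => hmin hx)
    rw [intervalIntegral.integral_const, smul_eq_mul, mul_comm] at h1
    exact h1
  have hderiv : ∀ x ∈ Set.uIcc t g, HasDerivAt (fun x => (f x) ^ 2)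
      (2 * f x * deriv f x) x := by
    intro x _
    have h1 : HasDerivAt f (deriv f x) x := (hf.differentiable one_ne_zero x).hasDerivAt
    have h2 : HasDerivAt (fun x => f x ^ 2) (↑2 * f x ^ (2 - 1) * deriv f x) x := h1.pow 2
    convert h2 using 1
    push_cast
    ring
  have hu : Continuous fun x => 2 * f x * deriv f x :=
    (continuous_const.mul hfc).mul hf'
  have hFTC : (f g) ^ 2 = (f t) ^ 2 + ∫ x in t..g, 2 * f x * deriv f x := by
    rw [intervalIntegral.integral_eq_sub_of_hasDerivAt hderiv (hu.intervalIntegrable _ _)]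
    ring
  have hsub : Set.uIoc t g ⊆ Set.uIoc p q := by
    rw [Set.uIoc_of_le hpq.le, Set.uIoc]
    exact Set.Ioc_subset_Ioc (le_min ht.1 hg.1) (max_le ht.2 hg.2)
  have habs : |∫ x in t..g, 2 * f x * deriv f x|
      ≤ ∫ x in p..q, |2 * f x * deriv f x| := by
    have h0 := intervalIntegral.norm_integral_le_abs_integral_norm
      (f := fun x => 2 * f x * deriv f x) (a := t) (b := g) (μ := volume)
    simp only [Real.norm_eq_abs] at h0
    have h1 : abs (∫ x in t..g, |2 * f x * deriv f x|)
        ≤ abs (∫ x in p..q, |2 * f x * deriv f x|) := by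
      apply intervalIntegral.abs_integral_mono_interval hsub
      · exact Filter.Eventually.of_forall fun x => abs_nonneg _
      · exact (hu.abs.intervalIntegrable _ _)
    have h2 : abs (∫ x in p..q, |2 * f x * deriv f x|) = ∫ x in p..q, |2 * f x * deriv f x| :=
      abs_of_nonneg (intervalIntegral.integral_nonneg hpq.le fun x _ => abs_nonneg _)
    linarith
  have hptw : ∀ x, |2 * f x * deriv f x|
      ≤ (f x) ^ 2 / (q - p) + (q - p) * (deriv f x) ^ 2 := by
    intro x
    have heq : (f x) ^ 2 / (q - p) + (q - p) * (deriv f x) ^ 2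
        = ((f x) ^ 2 + (q - p) ^ 2 * (deriv f x) ^ 2) / (q - p) := by
      field_simp
    rw [heq, le_div_iff₀ hh, abs_mul, abs_mul, abs_two]
    nlinarith [sq_nonneg (|f x| - (q - p) * |deriv f x|), sq_abs (f x),
      sq_abs (deriv f x), abs_nonneg (f x), abs_nonneg (deriv f x)]
  have hbound : (∫ x in p..q, |2 * f x * deriv f x|)
      ≤ (1 / (q - p)) * (∫ x in p..q, (f x) ^ 2)
        + (q - p) * ∫ x in p..q, (deriv f x) ^ 2 := by
    have h1 : (∫ x in p..q, |2 * f x * deriv f x|)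
        ≤ ∫ x in p..q, ((f x) ^ 2 / (q - p) + (q - p) * (deriv f x) ^ 2) :=
      intervalIntegral.integral_mono_on hpq.le (hu.abs.intervalIntegrable _ _)
        ((((hfc.pow 2).div_const _).add
          (continuous_const.mul (hf'.pow 2))).intervalIntegrable _ _)
        (fun x _ => hptw x)
    rw [intervalIntegral.integral_add (f := fun x => f x ^ 2 / (q - p))
      (g := fun x => (q - p) * deriv f x ^ 2) (((hfc.pow 2).div_const _).intervalIntegrable _ _)
      ((continuous_const.mul (hf'.pow 2)).intervalIntegrable _ _),
      intervalIntegral.integral_div, intervalIntegral.integral_const_mul] at h1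
    calc (∫ x in p..q, |2 * f x * deriv f x|)
        ≤ (∫ x in p..q, (f x) ^ 2) / (q - p)
          + (q - p) * ∫ x in p..q, (deriv f x) ^ 2 := h1
      _ = (1 / (q - p)) * (∫ x in p..q, (f x) ^ 2)
          + (q - p) * ∫ x in p..q, (deriv f x) ^ 2 := by ring
  have hft : (f t) ^ 2 ≤ 1 / (q - p) * ∫ x in p..q, (f x) ^ 2 := by
    rw [one_div, inv_mul_eq_div, le_div_iff₀ hh]
    exact hmin'
  have hd2 : 0 ≤ ∫ x in p..q, (deriv f x) ^ 2 :=
    intervalIntegral.integral_nonneg hpq.le fun x _ => sq_nonneg _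
  have hle := le_abs_self (∫ x in t..g, 2 * f x * deriv f x)
  rw [hFTC]
  have h6 : 0 ≤ (q - p) * ∫ x in p..q, (deriv f x) ^ 2 := mul_nonneg hh.le hd2
  have e1 : (2 : ℝ) / (q - p) = 1 / (q - p) + 1 / (q - p) := by ring
  rw [e1, add_mul]
  linarith [hft, hbound, habs, hle, h6]

/-- Bound on a line integral against a bounded measurable coefficient. -/
lemma lineBound {α : ℝ → ℝ} (hα : Measurable α) {F : ℝ → ℝ} (hF : Continuous F)
    {αM c' d' s t : ℝ} (hbd : ∀ y ∈ Set.Icc c' d', |α y| ≤ αM)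
    (h1 : c' ≤ s) (h2 : s ≤ t) (h3 : t ≤ d') :
    (∫ y in s..t, α y * F y) ^ 2 ≤ αM ^ 2 * ((d' - c') * ∫ y in c'..d', (F y) ^ 2) := by
  have hcd : c' ≤ d' := le_trans h1 (le_trans h2 h3)
  have hαM : 0 ≤ αM := le_trans (abs_nonneg _) (hbd c' ⟨le_rfl, hcd⟩)
  obtain ⟨C, hC⟩ := (isCompact_Icc (a := s) (b := t)).exists_bound_of_continuousOn
    hF.continuousOn
  have hint : IntervalIntegrable (fun y => α y * F y) volume s t := by
    rw [intervalIntegrable_iff, Set.uIoc_of_le h2]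
    apply Measure.integrableOn_of_bounded (M := αM * |C|) measure_Ioc_lt_top.ne
      ((hα.mul hF.measurable).aestronglyMeasurable)
    filter_upwards [ae_restrict_mem measurableSet_Ioc] with y hy
    have hb : |α y| ≤ αM := hbd y ⟨le_trans h1 hy.1.le, le_trans hy.2 h3⟩
    have hFy : ‖F y‖ ≤ C := hC y ⟨hy.1.le, hy.2⟩
    calc ‖α y * F y‖ = |α y| * ‖F y‖ := by rw [norm_mul]; rfl
      _ ≤ αM * |C| := mul_le_mul hb (le_trans hFy (le_abs_self C)) (norm_nonneg _) hαM
  have step1 : |∫ y in s..t, α y * F y| ≤ αM * ∫ y in s..t, |F y| := by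
    calc |∫ y in s..t, α y * F y| ≤ ∫ y in s..t, |α y * F y| :=
          intervalIntegral.abs_integral_le_integral_abs h2
      _ ≤ ∫ y in s..t, αM * |F y| := by
          apply intervalIntegral.integral_mono_on h2 hint.abs
            ((continuous_const.mul hF.abs).intervalIntegrable _ _)
          intro y hy
          rw [abs_mul]
          exact mul_le_mul_of_nonneg_right (hbd y ⟨le_trans h1 hy.1, le_trans hy.2 h3⟩)
            (abs_nonneg _)
      _ = αM * ∫ y in s..t, |F y| := intervalIntegral.integral_const_mul _ _
  have step2 := cs_interval F hF h2
  have hIabs : (∫ y in s..t, α y * F y) ^ 2 ≤ αM ^ 2 * ((t - s) * ∫ y in s..t, (F y) ^ 2) := by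
    calc (∫ y in s..t, α y * F y) ^ 2 = |∫ y in s..t, α y * F y| ^ 2 := (sq_abs _).symm
      _ ≤ (αM * ∫ y in s..t, |F y|) ^ 2 := by
          apply pow_le_pow_left₀ (abs_nonneg _) step1
      _ = αM ^ 2 * (∫ y in s..t, |F y|) ^ 2 := by ring
      _ ≤ αM ^ 2 * ((t - s) * ∫ y in s..t, (F y) ^ 2) :=
          mul_le_mul_of_nonneg_left step2 (sq_nonneg _)
  refine le_trans hIabs (mul_le_mul_of_nonneg_left ?_ (sq_nonneg _))
  have hsub : (∫ y in s..t, (F y) ^ 2) ≤ ∫ y in c'..d', (F y) ^ 2 :=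
    intervalIntegral.integral_mono_interval h1 h2 h3
      (Filter.Eventually.of_forall fun y => sq_nonneg _) ((hF.pow 2).intervalIntegrable _ _)
  exact mul_le_mul (by linarith) hsub
    (intervalIntegral.integral_nonneg h2 fun _ _ => sq_nonneg _) (by linarith)

/-- Fubini for a continuous function on a closed rectangle. -/
lemma fubini_cont (f : ℝ × ℝ → ℝ) (hf : Continuous f) {p q c d : ℝ}
    (hpq : p ≤ q) (hcd : c ≤ d) :
    ∫ z in Set.Icc p q ×ˢ Set.Icc c d, f z = ∫ x in p..q, ∫ y in c..d, f (x, y) := by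
  have hint : IntegrableOn f (Set.Icc p q ×ˢ Set.Icc c d) := by
    apply hf.continuousOn.integrableOn_compact (isCompact_Icc.prod isCompact_Icc)
  rw [Measure.volume_eq_prod] at hint ⊢
  rw [MeasureTheory.setIntegral_prod _ hint]
  rw [intervalIntegral.integral_of_le hpq, ← MeasureTheory.integral_Icc_eq_integral_Ioc]
  apply setIntegral_congr_fun measurableSet_Icc
  intro x _
  simp only [intervalIntegral.integral_of_le hcd, MeasureTheory.integral_Icc_eq_integral_Ioc]

/-- Swapping the order of an iterated integral of a continuous function. -/
lemma iter_swap (f : ℝ × ℝ → ℝ) (hf : Continuous f) {p q c d : ℝ}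
    (hpq : p ≤ q) (hcd : c ≤ d) :
    (∫ y in c..d, ∫ x in p..q, f (x, y)) = ∫ x in p..q, ∫ y in c..d, f (x, y) := by
  rw [← fubini_cont f hf hpq hcd]
  have h1 := fubini_cont (fun z => f (z.2, z.1)) (hf.comp (continuous_snd.prodMk continuous_fst))
    hcd hpq
  rw [← h1]
  rw [Measure.volume_eq_prod, ← Measure.prod_restrict,
    ← Measure.prod_restrict]
  exact MeasureTheory.integral_prod_swap f


lemma hasDerivAt_pdx {G : ℝ × ℝ → ℝ} (hG : Differentiable ℝ G) (x y : ℝ) :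
    HasDerivAt (fun x => G (x, y)) (pdx G (x, y)) x :=
  (hG (x, y)).hasFDerivAt.comp_hasDerivAt x ((hasDerivAt_id x).prodMk (hasDerivAt_const x y))

lemma hasDerivAt_pdy {G : ℝ × ℝ → ℝ} (hG : Differentiable ℝ G) (x y : ℝ) :
    HasDerivAt (fun y => G (x, y)) (pdy G (x, y)) y :=
  (hG (x, y)).hasFDerivAt.comp_hasDerivAt y ((hasDerivAt_const y x).prodMk (hasDerivAt_id y))

lemma contDiff_pdx {G : ℝ × ℝ → ℝ} {m n : ℕ} (hG : ContDiff ℝ n G) (h : m + 1 ≤ n) :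
    ContDiff ℝ m (pdx G) :=
  (hG.fderiv_right (by exact_mod_cast h)).clm_apply contDiff_const

lemma contDiff_pdy {G : ℝ × ℝ → ℝ} {m n : ℕ} (hG : ContDiff ℝ n G) (h : m + 1 ≤ n) :
    ContDiff ℝ m (pdy G) :=
  (hG.fderiv_right (by exact_mod_cast h)).clm_apply contDiff_const

lemma continuous_pdx {G : ℝ × ℝ → ℝ} (hG : ContDiff ℝ 1 G) : Continuous (pdx G) :=
  (contDiff_pdx (m := 0) hG le_rfl).continuous

lemma continuous_pdy {G : ℝ × ℝ → ℝ} (hG : ContDiff ℝ 1 G) : Continuous (pdy G) :=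
  (contDiff_pdy (m := 0) hG le_rfl).continuous

/-- Trace inequality in the `x` direction, integrated in `y`. -/
lemma trace2D_x {G : ℝ × ℝ → ℝ} (hG : ContDiff ℝ 1 G) {p q g c d : ℝ} (hpq : p < q)
    (hg : g ∈ Set.Icc p q) (hcd : c ≤ d) :
    (∫ y in c..d, (G (g, y)) ^ 2)
      ≤ (2 / (q - p)) * (∫ x in p..q, ∫ y in c..d, (G (x, y)) ^ 2)
        + (2 * (q - p)) * ∫ x in p..q, ∫ y in c..d, (pdx G (x, y)) ^ 2 := by
  have hc : Continuous G := hG.continuous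
  have hc' : Continuous (pdx G) := continuous_pdx hG
  have hptw : ∀ y, (G (g, y)) ^ 2 ≤ (2 / (q - p)) * (∫ x in p..q, (G (x, y)) ^ 2)
      + (2 * (q - p)) * ∫ x in p..q, (pdx G (x, y)) ^ 2 := by
    intro y
    have hf1 : ContDiff ℝ 1 (fun x => G (x, y)) := hG.comp (contDiff_id.prodMk contDiff_const)
    have h := trace1D hf1 hpq hg
    have hder : (∫ x in p..q, (deriv (fun x => G (x, y)) x) ^ 2)
        = ∫ x in p..q, (pdx G (x, y)) ^ 2 := by
      apply intervalIntegral.integral_congr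
      intro x _
      show deriv (fun x => G (x, y)) x ^ 2 = pdx G (x, y) ^ 2
      rw [(hasDerivAt_pdx (hG.differentiable one_ne_zero) x y).deriv]
    rwa [hder] at h
  have hH1 : Continuous fun y => ∫ x in p..q, (G (x, y)) ^ 2 :=
    intervalIntegral.continuous_parametric_intervalIntegral_of_continuous'
      (f := fun y x => (G (x, y)) ^ 2)
      (by exact ((hc.comp (continuous_snd.prodMk continuous_fst)).pow 2)) _ _
  have hH2 : Continuous fun y => ∫ x in p..q, (pdx G (x, y)) ^ 2 :=
    intervalIntegral.continuous_parametric_intervalIntegral_of_continuous'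
      (f := fun y x => (pdx G (x, y)) ^ 2)
      (by exact ((hc'.comp (continuous_snd.prodMk continuous_fst)).pow 2)) _ _
  have hmono : (∫ y in c..d, (G (g, y)) ^ 2)
      ≤ ∫ y in c..d, ((2 / (q - p)) * (∫ x in p..q, (G (x, y)) ^ 2)
        + (2 * (q - p)) * ∫ x in p..q, (pdx G (x, y)) ^ 2) := by
    apply intervalIntegral.integral_mono_on hcd
      (((hc.comp (continuous_const.prodMk continuous_id)).pow 2).intervalIntegrable _ _)
      (((continuous_const.mul hH1).add (continuous_const.mul hH2)).intervalIntegrable _ _)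
    exact fun y _ => hptw y
  rw [intervalIntegral.integral_add (f := fun y => (2 / (q - p)) * ∫ x in p..q, (G (x, y)) ^ 2)
    (g := fun y => (2 * (q - p)) * ∫ x in p..q, (pdx G (x, y)) ^ 2)
    ((continuous_const.mul hH1).intervalIntegrable _ _)
    ((continuous_const.mul hH2).intervalIntegrable _ _),
    intervalIntegral.integral_const_mul, intervalIntegral.integral_const_mul] at hmono
  rw [iter_swap (fun z => (G z) ^ 2) (hc.pow 2) hpq.le hcd,
    iter_swap (fun z => (pdx G z) ^ 2) (hc'.pow 2) hpq.le hcd] at hmono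
  exact hmono

/-- Trace inequality in the `y` direction, integrated in `x`. -/
lemma trace2D_y {H : ℝ × ℝ → ℝ} (hH : ContDiff ℝ 1 H) {p q g c d : ℝ} (hcd : c < d)
    (hg : g ∈ Set.Icc c d) (hpq : p ≤ q) :
    (∫ x in p..q, (H (x, g)) ^ 2)
      ≤ (2 / (d - c)) * (∫ x in p..q, ∫ y in c..d, (H (x, y)) ^ 2)
        + (2 * (d - c)) * ∫ x in p..q, ∫ y in c..d, (pdy H (x, y)) ^ 2 := by
  have hc : Continuous H := hH.continuous
  have hc' : Continuous (pdy H) := continuous_pdy hH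
  have hptw : ∀ x, (H (x, g)) ^ 2 ≤ (2 / (d - c)) * (∫ y in c..d, (H (x, y)) ^ 2)
      + (2 * (d - c)) * ∫ y in c..d, (pdy H (x, y)) ^ 2 := by
    intro x
    have hf1 : ContDiff ℝ 1 (fun y => H (x, y)) := hH.comp (contDiff_const.prodMk contDiff_id)
    have h := trace1D hf1 hcd hg
    have hder : (∫ y in c..d, (deriv (fun y => H (x, y)) y) ^ 2)
        = ∫ y in c..d, (pdy H (x, y)) ^ 2 := by
      apply intervalIntegral.integral_congr
      intro y _
      show deriv (fun y => H (x, y)) y ^ 2 = pdy H (x, y) ^ 2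
      rw [(hasDerivAt_pdy (hH.differentiable one_ne_zero) x y).deriv]
    rwa [hder] at h
  have hH1 : Continuous fun x => ∫ y in c..d, (H (x, y)) ^ 2 :=
    intervalIntegral.continuous_parametric_intervalIntegral_of_continuous'
      (f := fun x y => (H (x, y)) ^ 2)
      (by exact ((hc.comp (continuous_fst.prodMk continuous_snd)).pow 2)) _ _
  have hH2 : Continuous fun x => ∫ y in c..d, (pdy H (x, y)) ^ 2 :=
    intervalIntegral.continuous_parametric_intervalIntegral_of_continuous'
      (f := fun x y => (pdy H (x, y)) ^ 2)
      (by exact ((hc'.comp (continuous_fst.prodMk continuous_snd)).pow 2)) _ _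
  have hmono : (∫ x in p..q, (H (x, g)) ^ 2)
      ≤ ∫ x in p..q, ((2 / (d - c)) * (∫ y in c..d, (H (x, y)) ^ 2)
        + (2 * (d - c)) * ∫ y in c..d, (pdy H (x, y)) ^ 2) := by
    apply intervalIntegral.integral_mono_on hpq
      (((hc.comp (continuous_id.prodMk continuous_const)).pow 2).intervalIntegrable _ _)
      (((continuous_const.mul hH1).add (continuous_const.mul hH2)).intervalIntegrable _ _)
    exact fun x _ => hptw x
  rw [intervalIntegral.integral_add (f := fun x => (2 / (d - c)) * ∫ y in c..d, (H (x, y)) ^ 2)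
    (g := fun x => (2 * (d - c)) * ∫ y in c..d, (pdy H (x, y)) ^ 2)
    ((continuous_const.mul hH1).intervalIntegrable _ _)
    ((continuous_const.mul hH2).intervalIntegrable _ _),
    intervalIntegral.integral_const_mul, intervalIntegral.integral_const_mul] at hmono
  exact hmono

/-- An iterated integral is dominated by a set integral of a pointwise larger function. -/
lemma iter_le_cell {f g : ℝ × ℝ → ℝ} (hf : Continuous f) (hg : Continuous g)
    (hle : ∀ z, f z ≤ g z) {p q c d : ℝ} (hpq : p ≤ q) (hcd : c ≤ d) :
    (∫ x in p..q, ∫ y in c..d, f (x, y)) ≤ ∫ z in Set.Icc p q ×ˢ Set.Icc c d, g z := by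
  rw [fubini_cont g hg hpq hcd]
  apply intervalIntegral.integral_mono_on hpq
    ((intervalIntegral.continuous_parametric_intervalIntegral_of_continuous'
      (f := fun x y => f (x, y))
      (by exact hf.comp (continuous_fst.prodMk continuous_snd)) _ _).intervalIntegrable _ _)
    ((intervalIntegral.continuous_parametric_intervalIntegral_of_continuous'
      (f := fun x y => g (x, y))
      (by exact hg.comp (continuous_fst.prodMk continuous_snd)) _ _).intervalIntegrable _ _)
  intro x _
  apply intervalIntegral.integral_mono_on hcd
    ((hf.comp (continuous_const.prodMk continuous_id)).intervalIntegrable _ _)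
    ((hg.comp (continuous_const.prodMk continuous_id)).intervalIntegrable _ _)
  exact fun y _ => hle (x, y)

lemma iter_nonneg {f : ℝ × ℝ → ℝ} (hf : ∀ z, 0 ≤ f z) {p q c d : ℝ}
    (hpq : p ≤ q) (hcd : c ≤ d) : 0 ≤ ∫ x in p..q, ∫ y in c..d, f (x, y) :=
  intervalIntegral.integral_nonneg hpq fun x _ =>
    intervalIntegral.integral_nonneg hcd fun y _ => hf (x, y)

end FVMAux

section FVMPart

open Set

variable {a b c d : ℝ} (P : RectPartition a b c d)

lemma Pxle {i j : ℕ} (hij : i ≤ j) (hj : j ≤ P.m) : P.x i ≤ P.x j := by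
  induction j with
  | zero =>
    have h0 : i = 0 := by omega
    subst h0; exact le_rfl
  | succ t ih =>
    rcases Nat.eq_or_lt_of_le hij with rfl | h
    · exact le_rfl
    · exact le_trans (ih (by omega) (by omega)) (P.hxlt t (by omega)).le

lemma Pyle {i j : ℕ} (hij : i ≤ j) (hj : j ≤ P.n) : P.y i ≤ P.y j := by
  induction j with
  | zero =>
    have h0 : i = 0 := by omega
    subst h0; exact le_rfl
  | succ t ih =>
    rcases Nat.eq_or_lt_of_le hij with rfl | h
    · exact le_rfl
    · exact le_trans (ih (by omega) (by omega)) (P.hylt t (by omega)).le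

lemma Phx_eq (i : ℕ) : P.hx i = P.x i - P.x (i - 1) := rfl

lemma Phy_eq (j : ℕ) : P.hy j = P.y j - P.y (j - 1) := rfl

lemma Phx_pos {i : ℕ} (h1 : 1 ≤ i) (h2 : i ≤ P.m) : 0 < P.hx i := by
  have h := P.hxlt (i - 1) (by omega)
  have he : i - 1 + 1 = i := by omega
  rw [he] at h
  rw [Phx_eq]; linarith

lemma Phy_pos {j : ℕ} (h1 : 1 ≤ j) (h2 : j ≤ P.n) : 0 < P.hy j := by
  have h := P.hylt (j - 1) (by omega)
  have he : j - 1 + 1 = j := by omega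
  rw [he] at h
  rw [Phy_eq]; linarith

lemma Phx_mem {i : ℕ} (h1 : 1 ≤ i) (h2 : i ≤ P.m) : P.hx i ∈ P.sides :=
  Finset.mem_union_left _ (Finset.mem_image_of_mem _ (Finset.mem_Icc.mpr ⟨h1, h2⟩))

lemma Phy_mem {j : ℕ} (h1 : 1 ≤ j) (h2 : j ≤ P.n) : P.hy j ∈ P.sides :=
  Finset.mem_union_right _ (Finset.mem_image_of_mem _ (Finset.mem_Icc.mpr ⟨h1, h2⟩))

variable {r : ℕ} {G : ℕ → ℝ}

lemma Pgx_eq {i k : ℕ} (hk : k ≤ r) :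
    P.gx r G i k = (P.x i + P.x (i - 1) + P.hx i * G k) / 2 := by
  rw [RectPartition.gx, if_neg (by omega)]

lemma Pgy_eq {j l : ℕ} (hl : l ≤ r) :
    P.gy r G j l = (P.y j + P.y (j - 1) + P.hy j * G l) / 2 := by
  rw [RectPartition.gy, if_neg (by omega)]

lemma Pgy_top_eq {j : ℕ} :
    P.gy r G j (r + 1)
      = if j = P.n then P.y P.n else (P.y (j + 1) + P.y j + P.hy (j + 1) * G 1) / 2 := by
  rw [RectPartition.gy, if_pos rfl]

lemma Pgx_top_eq {i : ℕ} :
    P.gx r G i (r + 1)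
      = if i = P.m then P.x P.m else (P.x (i + 1) + P.x i + P.hx (i + 1) * G 1) / 2 := by
  rw [RectPartition.gx, if_pos rfl]

lemma Pgx_mem (hr : 1 ≤ r) (hG : IsGaussPoints r G) {i k : ℕ} (hi1 : 1 ≤ i) (hi2 : i ≤ P.m)
    (hk1 : 1 ≤ k) (hk2 : k ≤ r) :
    P.x (i - 1) < P.gx r G i k ∧ P.gx r G i k < P.x i := by
  have hgk := (hG.2 k hk1 hk2).1
  have hp := Phx_pos P hi1 hi2
  rw [Phx_eq] at hp
  rw [Pgx_eq P hk2, Phx_eq]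
  constructor <;> nlinarith [hgk.1, hgk.2]

lemma Pgy_mem (hr : 1 ≤ r) (hG : IsGaussPoints r G) {j l : ℕ} (hj1 : 1 ≤ j) (hj2 : j ≤ P.n)
    (hl1 : 1 ≤ l) (hl2 : l ≤ r) :
    P.y (j - 1) < P.gy r G j l ∧ P.gy r G j l < P.y j := by
  have hgl := (hG.2 l hl1 hl2).1
  have hp := Phy_pos P hj1 hj2
  rw [Phy_eq] at hp
  rw [Pgy_eq P hl2, Phy_eq]
  constructor <;> nlinarith [hgl.1, hgl.2]

/-- Location facts for the `y`-Gauss subintervals. -/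
lemma PgyFacts (hr : 1 ≤ r) (hG : IsGaussPoints r G) {j l : ℕ} (hj1 : 1 ≤ j) (hj2 : j ≤ P.n)
    (hl1 : 1 ≤ l) (hl2 : l ≤ r) :
    P.y (j - 1) ≤ P.gy r G j l ∧
    P.gy r G j l ≤ min (P.gy r G j (l + 1)) (P.y j) ∧
    min (P.gy r G j (l + 1)) (P.y j) ≤ P.y j ∧
    P.y j ≤ max (P.gy r G j (l + 1)) (P.y j) ∧
    (l < r → max (P.gy r G j (l + 1)) (P.y j) = P.y j) ∧
    (j < P.n → max (P.gy r G j (l + 1)) (P.y j) ≤ P.y (j + 1)) := by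
  obtain ⟨hlow, hhigh⟩ := Pgy_mem P hr hG hj1 hj2 hl1 hl2
  have hp := Phy_pos P hj1 hj2
  refine ⟨hlow.le, ?_, min_le_right _ _, le_max_right _ _, ?_, ?_⟩
  · rcases Nat.lt_or_ge l r with hlr | hlr
    · have hmono := hG.1 l hl1 hlr
      have h1 : P.gy r G j l < P.gy r G j (l + 1) := by
        rw [Pgy_eq P hl2, Pgy_eq P (by omega)]
        nlinarith [hp]
      exact le_min h1.le hhigh.le
    · have hl : l = r := by omega
      subst hl
      rw [Pgy_top_eq]
      by_cases hjn : j = P.n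
      · rw [if_pos hjn]
        have h' : P.y P.n = P.y j := by rw [hjn]
        rw [h']
        exact le_min hhigh.le hhigh.le
      · rw [if_neg hjn]
        have hp1 := Phy_pos P (j := j + 1) (by omega) (by omega)
        have hg1 := (hG.2 1 le_rfl hr).1
        have hq : P.y j < (P.y (j + 1) + P.y j + P.hy (j + 1) * G 1) / 2 := by
          have he : P.hy (j + 1) = P.y (j + 1) - P.y j := by rw [Phy_eq]; norm_num
          rw [he] at hp1 ⊢
          nlinarith [hg1.1, hg1.2]
        exact le_min (le_trans hhigh.le hq.le) hhigh.le
  · intro hlr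
    have hg2 := (hG.2 (l + 1) (by omega) (by omega)).1
    have h2 : P.gy r G j (l + 1) ≤ P.y j := by
      rw [Pgy_eq P (by omega), Phy_eq] at *
      nlinarith [hg2.1, hg2.2, hp]
    exact max_eq_right h2
  · intro hjn
    rcases Nat.lt_or_ge l r with hlr | hlr
    · have hg2 := (hG.2 (l + 1) (by omega) (by omega)).1
      have h2 : P.gy r G j (l + 1) ≤ P.y j := by
        rw [Pgy_eq P (by omega), Phy_eq] at *
        nlinarith [hg2.1, hg2.2, hp]
      rw [max_eq_right h2]
      exact (Pyle P (by omega) (by omega))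
    · have hl : l = r := by omega
      subst hl
      rw [Pgy_top_eq, if_neg (by omega)]
      have hp1 := Phy_pos P (j := j + 1) (by omega) (by omega)
      have hg1 := (hG.2 1 le_rfl hr).1
      have he : P.hy (j + 1) = P.y (j + 1) - P.y j := by rw [Phy_eq]; norm_num
      have hq : (P.y (j + 1) + P.y j + P.hy (j + 1) * G 1) / 2 ≤ P.y (j + 1) := by
        rw [he] at hp1 ⊢
        nlinarith [hg1.1, hg1.2]
      have hyy : P.y j ≤ P.y (j + 1) := Pyle P (by omega) (by omega)
      rw [max_le_iff]
      exact ⟨hq, hyy⟩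

/-- Location facts for the `x`-Gauss subintervals. -/
lemma PgxFacts (hr : 1 ≤ r) (hG : IsGaussPoints r G) {i k : ℕ} (hi1 : 1 ≤ i) (hi2 : i ≤ P.m)
    (hk1 : 1 ≤ k) (hk2 : k ≤ r) :
    P.x (i - 1) ≤ P.gx r G i k ∧
    P.gx r G i k ≤ min (P.gx r G i (k + 1)) (P.x i) ∧
    min (P.gx r G i (k + 1)) (P.x i) ≤ P.x i ∧
    P.x i ≤ max (P.gx r G i (k + 1)) (P.x i) ∧
    (k < r → max (P.gx r G i (k + 1)) (P.x i) = P.x i) ∧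
    (i < P.m → max (P.gx r G i (k + 1)) (P.x i) ≤ P.x (i + 1)) := by
  obtain ⟨hlow, hhigh⟩ := Pgx_mem P hr hG hi1 hi2 hk1 hk2
  have hp := Phx_pos P hi1 hi2
  refine ⟨hlow.le, ?_, min_le_right _ _, le_max_right _ _, ?_, ?_⟩
  · rcases Nat.lt_or_ge k r with hkr | hkr
    · have hmono := hG.1 k hk1 hkr
      have h1 : P.gx r G i k < P.gx r G i (k + 1) := by
        rw [Pgx_eq P hk2, Pgx_eq P (by omega)]
        nlinarith [hp]
      exact le_min h1.le hhigh.le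
    · have hk : k = r := by omega
      subst hk
      rw [Pgx_top_eq]
      by_cases him : i = P.m
      · rw [if_pos him]
        have h' : P.x P.m = P.x i := by rw [him]
        rw [h']
        exact le_min hhigh.le hhigh.le
      · rw [if_neg him]
        have hp1 := Phx_pos P (i := i + 1) (by omega) (by omega)
        have hg1 := (hG.2 1 le_rfl hr).1
        have hq : P.x i < (P.x (i + 1) + P.x i + P.hx (i + 1) * G 1) / 2 := by
          have he : P.hx (i + 1) = P.x (i + 1) - P.x i := by rw [Phx_eq]; norm_num
          rw [he] at hp1 ⊢
          nlinarith [hg1.1, hg1.2]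
        exact le_min (le_trans hhigh.le hq.le) hhigh.le
  · intro hkr
    have hg2 := (hG.2 (k + 1) (by omega) (by omega)).1
    have h2 : P.gx r G i (k + 1) ≤ P.x i := by
      rw [Pgx_eq P (by omega), Phx_eq] at *
      nlinarith [hg2.1, hg2.2, hp]
    exact max_eq_right h2
  · intro him
    rcases Nat.lt_or_ge k r with hkr | hkr
    · have hg2 := (hG.2 (k + 1) (by omega) (by omega)).1
      have h2 : P.gx r G i (k + 1) ≤ P.x i := by
        rw [Pgx_eq P (by omega), Phx_eq] at *
        nlinarith [hg2.1, hg2.2, hp]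
      rw [max_eq_right h2]
      exact (Pxle P (by omega) (by omega))
    · have hk : k = r := by omega
      subst hk
      rw [Pgx_top_eq, if_neg (by omega)]
      have hp1 := Phx_pos P (i := i + 1) (by omega) (by omega)
      have hg1 := (hG.2 1 le_rfl hr).1
      have he : P.hx (i + 1) = P.x (i + 1) - P.x i := by rw [Phx_eq]; norm_num
      have hq : (P.x (i + 1) + P.x i + P.hx (i + 1) * G 1) / 2 ≤ P.x (i + 1) := by
        rw [he] at hp1 ⊢
        nlinarith [hg1.1, hg1.2]
      have hxx : P.x i ≤ P.x (i + 1) := Pxle P (by omega) (by omega)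
      rw [max_le_iff]
      exact ⟨hq, hxx⟩

end FVMPart

section FVMSum

lemma shift_sum_le {n : ℕ} (f : ℕ → ℝ) (hf : ∀ j ∈ Finset.Icc 1 n, 0 ≤ f j) :
    (∑ j ∈ Finset.Icc 1 n, if j = n then 0 else f (j + 1)) ≤ ∑ j ∈ Finset.Icc 1 n, f j := by
  rcases Nat.eq_zero_or_pos n with rfl | hn
  · simp
  have hins : Finset.Icc 1 n = insert n (Finset.Ico 1 n) := (Finset.Ico_insert_right hn).symm
  have h1 : (∑ j ∈ Finset.Ico 1 n, if j = n then (0:ℝ) else f (j + 1))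
      = ∑ j ∈ Finset.Ico 1 n, f (j + 1) :=
    Finset.sum_congr rfl fun j hj => if_neg (by simp at hj; omega)
  have h2 : (∑ j ∈ Finset.Ico 1 n, f (j + 1)) = ∑ j ∈ Finset.Ico 2 (n + 1), f j := by
    rw [Finset.sum_Ico_eq_sum_range, Finset.sum_Ico_eq_sum_range]
    have he : n + 1 - 2 = n - 1 := by omega
    rw [he]
    exact Finset.sum_congr rfl fun i _ => by congr 1; omega
  have h4 : (∑ j ∈ Finset.Ico 2 (n + 1), f j) ≤ ∑ j ∈ Finset.Icc 1 n, f j := by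
    apply Finset.sum_le_sum_of_subset_of_nonneg
    · intro j hj; simp at hj ⊢; omega
    · intro j hj _; exact hf j hj
  calc (∑ j ∈ Finset.Icc 1 n, if j = n then (0:ℝ) else f (j + 1))
      = (if n = n then (0:ℝ) else f (n + 1))
        + ∑ j ∈ Finset.Ico 1 n, (if j = n then (0:ℝ) else f (j + 1)) := by
        rw [hins, Finset.sum_insert (by simp)]
    _ = ∑ j ∈ Finset.Ico 2 (n + 1), f j := by rw [if_pos rfl, h1, h2, zero_add]
    _ ≤ ∑ j ∈ Finset.Icc 1 n, f j := h4

end FVMSum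


set_option maxHeartbeats 2000000 in
/-- Continuity (boundedness) of the FVM bilinear form: there is `M₀ = M₀(r, σ) > 0`
such that for every `σ`-quasi-uniform partition, every bounded measurable `α`,
every `v` continuous on `Ω`, vanishing on `∂Ω` and `C²` on each closed cell, and
every test function `w`, `|a_P(v, w)| ≤ M₀ (sup|α|) |v|_P |w|_{P'}`. -/
theorem fvm_continuity (r : ℕ) (hr : 1 ≤ r) (G : ℕ → ℝ) (hG : IsGaussPoints r G)
    (σ : ℝ) (hσ : 1 ≤ σ) :
    ∃ M₀ : ℝ, 0 < M₀ ∧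
      ∀ (a b c d : ℝ), a < b → c < d →
      ∀ P : RectPartition a b c d, P.QuasiUniform σ →
      ∀ α : ℝ × ℝ → ℝ, Measurable α →
      ∀ αM : ℝ, (∀ z ∈ P.dom, |α z| ≤ αM) →
      ∀ v : PiecewiseFun P, ContinuousOn v.toFun P.dom →
        (∀ z ∈ P.bdry, v.toFun z = 0) → CellSmooth P 2 v →
      ∀ w : ℕ → ℕ → ℕ → ℕ → ℝ, IsTestFun r P w →
        |aP r G P α (cellDx v) (cellDy v) w| ≤ M₀ * αM * semiP P v * dualSemi r P w := by
  have hσ0 : (0:ℝ) < σ := lt_of_lt_of_le one_pos hσ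
  have hr0 : (0:ℝ) < r := by exact_mod_cast Nat.lt_of_lt_of_le Nat.zero_lt_one hr
  refine ⟨6 * σ * r, by positivity, ?_⟩
  intro a b c d hab hcd P hQU α hα αM hbd v hvc hv0 hv2 w hw
  clear hvc hv0 hw
  have hαM : 0 ≤ αM := le_trans (abs_nonneg _)
    (hbd (a, c) (Set.mem_prod.mpr ⟨⟨le_rfl, hab.le⟩, ⟨le_rfl, hcd.le⟩⟩))
  have sq_add2 : ∀ X Y : ℝ, (X + Y) ^ 2 ≤ 2 * X ^ 2 + 2 * Y ^ 2 := by
    intro X Y; nlinarith [sq_nonneg (X - Y)]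
  -- basic coordinate facts
  have hyle : ∀ {j : ℕ}, 1 ≤ j → j ≤ P.n → P.y (j - 1) ≤ P.y j := by
    intro j h1 h2
    have h := Phy_pos P h1 h2
    rw [Phy_eq] at h; linarith
  have hxle : ∀ {i : ℕ}, 1 ≤ i → i ≤ P.m → P.x (i - 1) ≤ P.x i := by
    intro i h1 h2
    have h := Phx_pos P h1 h2
    rw [Phx_eq] at h; linarith
  -- cellwise smoothness
  have hV2 : ∀ {i j : ℕ}, 1 ≤ i → i ≤ P.m → 1 ≤ j → j ≤ P.n →
      ContDiff ℝ 2 (v.cellFun i j) := by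
    intro i j h1 h2 h3 h4
    exact hv2 i (Finset.mem_Icc.mpr ⟨h1, h2⟩) j (Finset.mem_Icc.mpr ⟨h3, h4⟩)
  have hDx : ∀ i j, cellDx v i j = pdx (v.cellFun i j) := fun _ _ => rfl
  have hDy : ∀ i j, cellDy v i j = pdy (v.cellFun i j) := fun _ _ => rfl
  have hcontX : ∀ {i j : ℕ}, 1 ≤ i → i ≤ P.m → 1 ≤ j → j ≤ P.n →
      ContDiff ℝ 1 (cellDx v i j) := by
    intro i j h1 h2 h3 h4
    rw [hDx]
    exact contDiff_pdx (hV2 h1 h2 h3 h4) le_rfl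
  have hcontY : ∀ {i j : ℕ}, 1 ≤ i → i ≤ P.m → 1 ≤ j → j ≤ P.n →
      ContDiff ℝ 1 (cellDy v i j) := by
    intro i j h1 h2 h3 h4
    rw [hDy]
    exact contDiff_pdy (hV2 h1 h2 h3 h4) le_rfl
  -- the cellwise energies
  set CT : ℕ → ℕ → ℝ := fun i j =>
    (∫ z in P.cell i j, ((cellDx v i j z) ^ 2 + (cellDy v i j z) ^ 2)) +
      (P.hx i ^ 2 + P.hy j ^ 2) *
        ∫ z in P.cell i j,
          ((pdx (pdx (v.cellFun i j)) z) ^ 2 + 2 * (pdy (pdx (v.cellFun i j)) z) ^ 2 +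
            (pdy (pdy (v.cellFun i j)) z) ^ 2) with hCT
  have hcellmeas : ∀ i j, MeasurableSet (P.cell i j) :=
    fun i j => (measurableSet_Icc.prod measurableSet_Icc)
  have hCTnn : ∀ i j, 0 ≤ CT i j := by
    intro i j
    apply add_nonneg
    · exact setIntegral_nonneg (hcellmeas i j) fun z _ => by positivity
    · exact mul_nonneg (by positivity)
        (setIntegral_nonneg (hcellmeas i j) fun z _ => by positivity)
  set S : ℝ := ∑ i ∈ Finset.Icc 1 P.m, ∑ j ∈ Finset.Icc 1 P.n, CT i j with hS
  have hSnn : 0 ≤ S :=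
    Finset.sum_nonneg fun i _ => Finset.sum_nonneg fun j _ => hCTnn i j
  have hsemi2 : semiP P v ^ 2 = S := by
    rw [semiP, Real.sq_sqrt]
    exact Finset.sum_nonneg fun i _ => Finset.sum_nonneg fun j _ => hCTnn i j
  have hsemiNN : 0 ≤ semiP P v := Real.sqrt_nonneg _
  have hdualNN : 0 ≤ dualSemi r P w := Real.sqrt_nonneg _
  have hdual2 : dualSemi r P w ^ 2
      = (∑ q ∈ idxX r P, (jumpX r w q.1 q.2.1 q.2.2.1 q.2.2.2) ^ 2) +
        (∑ q ∈ idxY r P, (jumpY r w q.1 q.2.1 q.2.2.1 q.2.2.2) ^ 2) := by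
    rw [dualSemi, Real.sq_sqrt]
    apply add_nonneg <;> exact Finset.sum_nonneg fun q _ => sq_nonneg _
  -- boundedness of α along Gauss lines
  have hbdV : ∀ {i k j' : ℕ}, 1 ≤ i → i ≤ P.m → 1 ≤ k → k ≤ r → 1 ≤ j' → j' ≤ P.n →
      ∀ t ∈ Set.Icc (P.y (j' - 1)) (P.y j'), |α (P.gx r G i k, t)| ≤ αM := by
    intro i k j' hi1 hi2 hk1 hk2 hj1 hj2 t ht
    apply hbd
    have hgm := Pgx_mem P hr hG hi1 hi2 hk1 hk2
    have h0 : P.x 0 ≤ P.x (i - 1) := Pxle P (Nat.zero_le _) (by omega)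
    have h1 : P.x i ≤ P.x P.m := Pxle P hi2 le_rfl
    have h2 : P.y 0 ≤ P.y (j' - 1) := Pyle P (Nat.zero_le _) (by omega)
    have h3 : P.y j' ≤ P.y P.n := Pyle P hj2 le_rfl
    refine Set.mem_prod.mpr ⟨⟨?_, ?_⟩, ⟨?_, ?_⟩⟩
    · show a ≤ P.gx r G i k
      linarith [hgm.1, P.hxa]
    · show P.gx r G i k ≤ b
      linarith [hgm.2, P.hxb]
    · show c ≤ t
      linarith [ht.1, P.hyc]
    · show t ≤ d
      linarith [ht.2, P.hyd]
  have hbdH : ∀ {j l i' : ℕ}, 1 ≤ j → j ≤ P.n → 1 ≤ l → l ≤ r → 1 ≤ i' → i' ≤ P.m →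
      ∀ t ∈ Set.Icc (P.x (i' - 1)) (P.x i'), |α (t, P.gy r G j l)| ≤ αM := by
    intro j l i' hj1 hj2 hl1 hl2 hi1 hi2 t ht
    apply hbd
    have hgm := Pgy_mem P hr hG hj1 hj2 hl1 hl2
    have h0 : P.y 0 ≤ P.y (j - 1) := Pyle P (Nat.zero_le _) (by omega)
    have h1 : P.y j ≤ P.y P.n := Pyle P hj2 le_rfl
    have h2 : P.x 0 ≤ P.x (i' - 1) := Pxle P (Nat.zero_le _) (by omega)
    have h3 : P.x i' ≤ P.x P.m := Pxle P hi2 le_rfl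
    refine Set.mem_prod.mpr ⟨⟨?_, ?_⟩, ⟨?_, ?_⟩⟩
    · show a ≤ t
      linarith [ht.1, P.hxa]
    · show t ≤ b
      linarith [ht.2, P.hxb]
    · show c ≤ P.gy r G j l
      linarith [hgm.1, P.hyc]
    · show P.gy r G j l ≤ d
      linarith [hgm.2, P.hyd]
  ---------------------------------------------------------------- X part
  set TX : ℕ × ℕ × ℕ × ℕ → ℝ := fun q =>
    ((∫ t in (P.gy r G q.2.2.1 q.2.2.2)..(min (P.gy r G q.2.2.1 (q.2.2.2 + 1)) (P.y q.2.2.1)),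
        α (P.gx r G q.1 q.2.1, t) * cellDx v q.1 q.2.2.1 (P.gx r G q.1 q.2.1, t)) +
     (∫ t in (P.y q.2.2.1)..(max (P.gy r G q.2.2.1 (q.2.2.2 + 1)) (P.y q.2.2.1)),
        α (P.gx r G q.1 q.2.1, t) * cellDx v q.1 (q.2.2.1 + 1) (P.gx r G q.1 q.2.1, t)))
    with hTX
  set LX : ℕ → ℕ → ℕ → ℝ := fun i j k =>
    ∫ y in (P.y (j - 1))..(P.y j), (cellDx v i j (P.gx r G i k, y)) ^ 2 with hLX
  have hLXnn : ∀ i j k, 1 ≤ j → j ≤ P.n → 0 ≤ LX i j k := by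
    intro i j k h1 h2
    exact intervalIntegral.integral_nonneg (hyle h1 h2) fun y _ => sq_nonneg _
  set BX : ℕ × ℕ × ℕ × ℕ → ℝ := fun q =>
    2 * (αM ^ 2 * (P.hy q.2.2.1 * LX q.1 q.2.2.1 q.2.1)) +
      2 * (if q.2.2.1 = P.n then 0
        else αM ^ 2 * (P.hy (q.2.2.1 + 1) * LX q.1 (q.2.2.1 + 1) q.2.1)) with hBX
  have stepAX : ∀ q ∈ idxX r P, TX q ^ 2 ≤ BX q := by
    rintro ⟨i, k, j, l⟩ hq
    simp only [idxX, Finset.mem_filter, Finset.mem_product, Finset.mem_Icc] at hq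
    obtain ⟨⟨⟨hi1, hi2⟩, ⟨hk1, hk2⟩, ⟨hj1, hj2⟩, hl1, hl2⟩, hnot⟩ := hq
    have hyF := PgyFacts P hr hG hj1 hj2 hl1 hl2
    have hF1 : Continuous fun t => cellDx v i j (P.gx r G i k, t) :=
      (hcontX hi1 hi2 hj1 hj2).continuous.comp (continuous_const.prodMk continuous_id)
    have hmα : Measurable fun t : ℝ => α (P.gx r G i k, t) :=
      hα.comp (measurable_const.prodMk measurable_id)
    have hI1 := lineBound hmα hF1 (hbdV hi1 hi2 hk1 hk2 hj1 hj2)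
      hyF.1 hyF.2.1 hyF.2.2.1
    beta_reduce at hI1
    simp only [hTX, hBX, hLX, Phy_eq, Nat.add_sub_cancel]
    by_cases hjn : j = P.n
    · have hlr : l < r := by
        rcases Nat.lt_or_ge l r with h | h
        · exact h
        · exact absurd ⟨hjn, by omega⟩ hnot
      have hmax := hyF.2.2.2.2.1 hlr
      rw [hmax, intervalIntegral.integral_same, if_pos hjn]
      have h0 := le_trans (sq_nonneg _) hI1
      nlinarith [hI1]
    · have hjn' : j < P.n := by omega
      have hF2 : Continuous fun t => cellDx v i (j + 1) (P.gx r G i k, t) :=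
        (hcontX hi1 hi2 (by omega) (by omega)).continuous.comp
          (continuous_const.prodMk continuous_id)
      have hbd2 := hbdV hi1 hi2 hk1 hk2 (j' := j + 1) (by omega) (by omega)
      simp only [Nat.add_sub_cancel] at hbd2
      have hI2 := lineBound hmα hF2 hbd2 le_rfl hyF.2.2.2.1 (hyF.2.2.2.2.2 hjn')
      beta_reduce at hI2
      rw [if_neg hjn]
      have hsq := sq_add2
        (∫ t in (P.gy r G j l)..(min (P.gy r G j (l + 1)) (P.y j)),
          α (P.gx r G i k, t) * cellDx v i j (P.gx r G i k, t))
        (∫ t in (P.y j)..(max (P.gy r G j (l + 1)) (P.y j)),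
          α (P.gx r G i k, t) * cellDx v i (j + 1) (P.gx r G i k, t))
      linarith [hsq, hI1, hI2]
  have hTrX : ∀ {i j k : ℕ}, 1 ≤ i → i ≤ P.m → 1 ≤ j → j ≤ P.n → 1 ≤ k → k ≤ r →
      LX i j k ≤ 2 / P.hx i * (∫ x in (P.x (i - 1))..(P.x i), ∫ y in (P.y (j - 1))..(P.y j),
          (cellDx v i j (x, y)) ^ 2)
        + 2 * P.hx i * ∫ x in (P.x (i - 1))..(P.x i), ∫ y in (P.y (j - 1))..(P.y j),
          (pdx (cellDx v i j) (x, y)) ^ 2 := by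
    intro i j k hi1 hi2 hj1 hj2 hk1 hk2
    have hxlt : P.x (i - 1) < P.x i := by
      have h := Phx_pos P hi1 hi2; rw [Phx_eq] at h; linarith
    have hgm := Pgx_mem P hr hG hi1 hi2 hk1 hk2
    have h := trace2D_x (hcontX hi1 hi2 hj1 hj2) hxlt ⟨hgm.1.le, hgm.2.le⟩ (hyle hj1 hj2)
    rw [hLX, Phx_eq]
    exact h
  have hcellX : ∀ {i j : ℕ}, 1 ≤ i → i ≤ P.m → 1 ≤ j → j ≤ P.n →
      αM ^ 2 * (P.hy j * (2 / P.hx i * (∫ x in (P.x (i - 1))..(P.x i),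
          ∫ y in (P.y (j - 1))..(P.y j), (cellDx v i j (x, y)) ^ 2)
        + 2 * P.hx i * ∫ x in (P.x (i - 1))..(P.x i), ∫ y in (P.y (j - 1))..(P.y j),
          (pdx (cellDx v i j) (x, y)) ^ 2)) ≤ 2 * σ * (αM ^ 2 * CT i j) := by
    intro i j hi1 hi2 hj1 hj2
    have hxp := Phx_pos P hi1 hi2
    have hyp := Phy_pos P hj1 hj2
    have hQ : P.hy j ≤ σ * P.hx i := hQU _ (Phy_mem P hj1 hj2) _ (Phx_mem P hi1 hi2)
    have hcDx := (hcontX hi1 hi2 hj1 hj2).continuous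
    have hcDy := (hcontY hi1 hi2 hj1 hj2).continuous
    have hcxx : Continuous (pdx (cellDx v i j)) := by
      rw [hDx]; exact continuous_pdx (contDiff_pdx (hV2 hi1 hi2 hj1 hj2) le_rfl)
    have hcxy : Continuous (pdy (pdx (v.cellFun i j))) :=
      continuous_pdy (contDiff_pdx (hV2 hi1 hi2 hj1 hj2) le_rfl)
    have hcyy : Continuous (pdy (pdy (v.cellFun i j))) :=
      continuous_pdy (contDiff_pdy (hV2 hi1 hi2 hj1 hj2) le_rfl)
    have hE1 : (∫ x in (P.x (i - 1))..(P.x i), ∫ y in (P.y (j - 1))..(P.y j),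
        (cellDx v i j (x, y)) ^ 2)
        ≤ ∫ z in P.cell i j, ((cellDx v i j z) ^ 2 + (cellDy v i j z) ^ 2) :=
      iter_le_cell (hcDx.pow 2) ((hcDx.pow 2).add (hcDy.pow 2))
        (fun z => le_add_of_nonneg_right (sq_nonneg _)) (hxle hi1 hi2) (hyle hj1 hj2)
    have hE2 : (∫ x in (P.x (i - 1))..(P.x i), ∫ y in (P.y (j - 1))..(P.y j),
        (pdx (cellDx v i j) (x, y)) ^ 2)
        ≤ ∫ z in P.cell i j, ((pdx (pdx (v.cellFun i j)) z) ^ 2 +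
            2 * (pdy (pdx (v.cellFun i j)) z) ^ 2 + (pdy (pdy (v.cellFun i j)) z) ^ 2) := by
      apply iter_le_cell (hcxx.pow 2)
        (((hcxx.pow 2).add (continuous_const.mul (hcxy.pow 2))).add (hcyy.pow 2))
        ?_ (hxle hi1 hi2) (hyle hj1 hj2)
      intro z
      have e : pdx (cellDx v i j) z = pdx (pdx (v.cellFun i j)) z := by rw [hDx]
      simp only [Pi.add_apply, Pi.mul_apply, Pi.pow_apply]
      rw [e]
      nlinarith [sq_nonneg (pdy (pdx (v.cellFun i j)) z), sq_nonneg (pdy (pdy (v.cellFun i j)) z)]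
    have hE1nn : (0:ℝ) ≤ ∫ x in (P.x (i - 1))..(P.x i), ∫ y in (P.y (j - 1))..(P.y j),
        (cellDx v i j (x, y)) ^ 2 :=
      iter_nonneg (fun z => sq_nonneg _) (hxle hi1 hi2) (hyle hj1 hj2)
    have hE2nn : (0:ℝ) ≤ ∫ x in (P.x (i - 1))..(P.x i), ∫ y in (P.y (j - 1))..(P.y j),
        (pdx (cellDx v i j) (x, y)) ^ 2 :=
      iter_nonneg (fun z => sq_nonneg _) (hxle hi1 hi2) (hyle hj1 hj2)
    have hA2nn : (0:ℝ) ≤ ∫ z in P.cell i j, ((pdx (pdx (v.cellFun i j)) z) ^ 2 +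
        2 * (pdy (pdx (v.cellFun i j)) z) ^ 2 + (pdy (pdy (v.cellFun i j)) z) ^ 2) :=
      setIntegral_nonneg (hcellmeas i j) fun z _ => by positivity
    simp only [hCT]
    set E1 := ∫ x in (P.x (i - 1))..(P.x i), ∫ y in (P.y (j - 1))..(P.y j),
        (cellDx v i j (x, y)) ^ 2 with hE1d
    set E2 := ∫ x in (P.x (i - 1))..(P.x i), ∫ y in (P.y (j - 1))..(P.y j),
        (pdx (cellDx v i j) (x, y)) ^ 2 with hE2d
    set A1 := ∫ z in P.cell i j, ((cellDx v i j z) ^ 2 + (cellDy v i j z) ^ 2) with hA1d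
    set A2 := ∫ z in P.cell i j, ((pdx (pdx (v.cellFun i j)) z) ^ 2 +
        2 * (pdy (pdx (v.cellFun i j)) z) ^ 2 + (pdy (pdy (v.cellFun i j)) z) ^ 2) with hA2d
    have key1 : P.hy j * (2 / P.hx i) ≤ 2 * σ := by
      rw [mul_div_assoc', div_le_iff₀ hxp]
      nlinarith
    have key2 : P.hy j * (2 * P.hx i) ≤ P.hx i ^ 2 + P.hy j ^ 2 := by
      nlinarith [sq_nonneg (P.hx i - P.hy j)]
    have step1 : P.hy j * (2 / P.hx i * E1) ≤ 2 * σ * A1 := by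
      have e : P.hy j * (2 / P.hx i * E1) = (P.hy j * (2 / P.hx i)) * E1 := by ring
      rw [e]
      exact le_trans (mul_le_mul_of_nonneg_right key1 hE1nn)
        (mul_le_mul_of_nonneg_left hE1 (by positivity))
    have step2 : P.hy j * (2 * P.hx i * E2) ≤ (P.hx i ^ 2 + P.hy j ^ 2) * A2 := by
      have e : P.hy j * (2 * P.hx i * E2) = (P.hy j * (2 * P.hx i)) * E2 := by ring
      rw [e]
      exact le_trans (mul_le_mul_of_nonneg_right key2 hE2nn)
        (mul_le_mul_of_nonneg_left hE2 (by positivity))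
    have hh : (P.hx i ^ 2 + P.hy j ^ 2) * A2 ≤ 2 * σ * ((P.hx i ^ 2 + P.hy j ^ 2) * A2) := by
      nlinarith [mul_nonneg (by positivity : (0:ℝ) ≤ P.hx i ^ 2 + P.hy j ^ 2) hA2nn]
    have hfin : P.hy j * (2 / P.hx i * E1 + 2 * P.hx i * E2)
        ≤ 2 * σ * (A1 + (P.hx i ^ 2 + P.hy j ^ 2) * A2) := by
      have hd1 : P.hy j * (2 / P.hx i * E1 + 2 * P.hx i * E2)
          = P.hy j * (2 / P.hx i * E1) + P.hy j * (2 * P.hx i * E2) := by ring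
      have hd2 : 2 * σ * (A1 + (P.hx i ^ 2 + P.hy j ^ 2) * A2)
          = 2 * σ * A1 + 2 * σ * ((P.hx i ^ 2 + P.hy j ^ 2) * A2) := by ring
      linarith [step1, step2, hh]
    calc αM ^ 2 * (P.hy j * (2 / P.hx i * E1 + 2 * P.hx i * E2))
        ≤ αM ^ 2 * (2 * σ * (A1 + (P.hx i ^ 2 + P.hy j ^ 2) * A2)) :=
          mul_le_mul_of_nonneg_left hfin (sq_nonneg _)
      _ = 2 * σ * (αM ^ 2 * (A1 + (P.hx i ^ 2 + P.hy j ^ 2) * A2)) := by ring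
  have hTXsum : (∑ q ∈ idxX r P, TX q ^ 2) ≤ 8 * σ * (r:ℝ) ^ 2 * αM ^ 2 * S := by
    have h1 : (∑ q ∈ idxX r P, TX q ^ 2) ≤ ∑ q ∈ idxX r P, BX q := Finset.sum_le_sum stepAX
    have hBXnn : ∀ q ∈ Finset.Icc 1 P.m ×ˢ Finset.Icc 1 r ×ˢ Finset.Icc 1 P.n ×ˢ
        Finset.Icc 1 r, 0 ≤ BX q := by
      rintro ⟨i, k, j, l⟩ hq
      simp only [Finset.mem_product, Finset.mem_Icc] at hq
      obtain ⟨hi, hk, hj, hl⟩ := hq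
      simp only [hBX]
      apply add_nonneg
      · exact mul_nonneg (by norm_num) (mul_nonneg (sq_nonneg _)
          (mul_nonneg (Phy_pos P hj.1 hj.2).le (hLXnn _ _ _ hj.1 hj.2)))
      · apply mul_nonneg (by norm_num)
        by_cases hjn : j = P.n
        · rw [if_pos hjn]
        · rw [if_neg hjn]
          exact mul_nonneg (sq_nonneg _) (mul_nonneg (Phy_pos P (by omega) (by omega)).le
            (hLXnn _ _ _ (by omega) (by omega)))
    have h2 : (∑ q ∈ idxX r P, BX q) ≤ ∑ q ∈ Finset.Icc 1 P.m ×ˢ Finset.Icc 1 r ×ˢ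
        Finset.Icc 1 P.n ×ˢ Finset.Icc 1 r, BX q := by
      apply Finset.sum_le_sum_of_subset_of_nonneg (Finset.filter_subset _ _)
      exact fun q hq _ => hBXnn q hq
    have h3 : (∑ q ∈ Finset.Icc 1 P.m ×ˢ Finset.Icc 1 r ×ˢ Finset.Icc 1 P.n ×ˢ
        Finset.Icc 1 r, BX q)
        = ∑ i ∈ Finset.Icc 1 P.m, ∑ k ∈ Finset.Icc 1 r, ∑ j ∈ Finset.Icc 1 P.n,
            ∑ l ∈ Finset.Icc 1 r, BX (i, k, j, l) := by
      rw [Finset.sum_product]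
      exact Finset.sum_congr rfl fun i _ => by
        rw [Finset.sum_product]
        exact Finset.sum_congr rfl fun k _ => by rw [Finset.sum_product]
    have h4 : ∀ i k j, (∑ l ∈ Finset.Icc 1 r, BX (i, k, j, l)) = (r:ℝ) * BX (i, k, j, 1) := by
      intro i k j
      have hconst : ∀ l ∈ Finset.Icc 1 r, BX (i, k, j, l) = BX (i, k, j, 1) := fun l _ => rfl
      rw [Finset.sum_congr rfl hconst, Finset.sum_const, Nat.card_Icc, nsmul_eq_mul]
      norm_num
    have h5 : ∀ i ∈ Finset.Icc 1 P.m, ∀ k ∈ Finset.Icc 1 r,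
        (∑ j ∈ Finset.Icc 1 P.n, BX (i, k, j, 1))
          ≤ 4 * ∑ j ∈ Finset.Icc 1 P.n, αM ^ 2 * (P.hy j * LX i j k) := by
      intro i hi k hk
      have he : ∀ j, BX (i, k, j, 1)
          = (αM ^ 2 * (P.hy j * LX i j k)) * 2 +
            (if j = P.n then 0 else αM ^ 2 * (P.hy (j + 1) * LX i (j + 1) k)) * 2 :=
        fun j => by simp only [hBX]; ring
      rw [Finset.sum_congr rfl fun j _ => he j, Finset.sum_add_distrib,
        ← Finset.sum_mul, ← Finset.sum_mul]
      have hsh := shift_sum_le (n := P.n) (fun j => αM ^ 2 * (P.hy j * LX i j k))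
        (fun j hj => by
          rw [Finset.mem_Icc] at hj
          exact mul_nonneg (sq_nonneg _) (mul_nonneg (Phy_pos P hj.1 hj.2).le
            (hLXnn _ _ _ hj.1 hj.2)))
      beta_reduce at hsh
      linarith [hsh]
    have h6 : ∀ i ∈ Finset.Icc 1 P.m, ∀ k ∈ Finset.Icc 1 r,
        (∑ j ∈ Finset.Icc 1 P.n, αM ^ 2 * (P.hy j * LX i j k))
          ≤ ∑ j ∈ Finset.Icc 1 P.n, 2 * σ * (αM ^ 2 * CT i j) := by
      intro i hi k hk
      rw [Finset.mem_Icc] at hi hk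
      apply Finset.sum_le_sum
      intro j hj
      rw [Finset.mem_Icc] at hj
      have htr := hTrX hi.1 hi.2 hj.1 hj.2 hk.1 hk.2
      exact le_trans (mul_le_mul_of_nonneg_left
          (mul_le_mul_of_nonneg_left htr (Phy_pos P hj.1 hj.2).le) (sq_nonneg _))
        (hcellX hi.1 hi.2 hj.1 hj.2)
    calc (∑ q ∈ idxX r P, TX q ^ 2)
        ≤ ∑ q ∈ idxX r P, BX q := h1
      _ ≤ ∑ q ∈ Finset.Icc 1 P.m ×ˢ Finset.Icc 1 r ×ˢ Finset.Icc 1 P.n ×ˢ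
            Finset.Icc 1 r, BX q := h2
      _ = ∑ i ∈ Finset.Icc 1 P.m, ∑ k ∈ Finset.Icc 1 r, ∑ j ∈ Finset.Icc 1 P.n,
            ∑ l ∈ Finset.Icc 1 r, BX (i, k, j, l) := h3
      _ = ∑ i ∈ Finset.Icc 1 P.m, ∑ k ∈ Finset.Icc 1 r, ∑ j ∈ Finset.Icc 1 P.n,
            (r:ℝ) * BX (i, k, j, 1) :=
          Finset.sum_congr rfl fun i _ => Finset.sum_congr rfl fun k _ =>
            Finset.sum_congr rfl fun j _ => h4 i k j
      _ = ∑ i ∈ Finset.Icc 1 P.m, ∑ k ∈ Finset.Icc 1 r,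
            (r:ℝ) * ∑ j ∈ Finset.Icc 1 P.n, BX (i, k, j, 1) := by
          simp only [Finset.mul_sum]
      _ ≤ ∑ i ∈ Finset.Icc 1 P.m, ∑ k ∈ Finset.Icc 1 r,
            (r:ℝ) * (4 * ∑ j ∈ Finset.Icc 1 P.n, αM ^ 2 * (P.hy j * LX i j k)) := by
          apply Finset.sum_le_sum; intro i hi
          apply Finset.sum_le_sum; intro k hk
          exact mul_le_mul_of_nonneg_left (h5 i hi k hk) (by positivity)
      _ ≤ ∑ i ∈ Finset.Icc 1 P.m, ∑ k ∈ Finset.Icc 1 r,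
            (r:ℝ) * (4 * ∑ j ∈ Finset.Icc 1 P.n, 2 * σ * (αM ^ 2 * CT i j)) := by
          apply Finset.sum_le_sum; intro i hi
          apply Finset.sum_le_sum; intro k hk
          exact mul_le_mul_of_nonneg_left
            (mul_le_mul_of_nonneg_left (h6 i hi k hk) (by norm_num)) (by positivity)
      _ = ∑ i ∈ Finset.Icc 1 P.m,
            (r:ℝ) * ((r:ℝ) * (4 * ∑ j ∈ Finset.Icc 1 P.n, 2 * σ * (αM ^ 2 * CT i j))) := by
          apply Finset.sum_congr rfl; intro i _
          rw [Finset.sum_const, Nat.card_Icc, nsmul_eq_mul]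
          norm_num
      _ = 8 * σ * (r:ℝ) ^ 2 * αM ^ 2 * S := by
          rw [hS, Finset.mul_sum]
          apply Finset.sum_congr rfl; intro i _
          rw [Finset.mul_sum, Finset.mul_sum, Finset.mul_sum, Finset.mul_sum]
          apply Finset.sum_congr rfl; intro j _
          ring
  ---------------------------------------------------------------- Y part
  set TY : ℕ × ℕ × ℕ × ℕ → ℝ := fun q =>
    ((∫ t in (P.gx r G q.1 q.2.1)..(min (P.gx r G q.1 (q.2.1 + 1)) (P.x q.1)),
        α (t, P.gy r G q.2.2.1 q.2.2.2) * cellDy v q.1 q.2.2.1 (t, P.gy r G q.2.2.1 q.2.2.2)) +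
     (∫ t in (P.x q.1)..(max (P.gx r G q.1 (q.2.1 + 1)) (P.x q.1)),
        α (t, P.gy r G q.2.2.1 q.2.2.2) *
          cellDy v (q.1 + 1) q.2.2.1 (t, P.gy r G q.2.2.1 q.2.2.2)))
    with hTY
  set LY : ℕ → ℕ → ℕ → ℝ := fun i j l =>
    ∫ x in (P.x (i - 1))..(P.x i), (cellDy v i j (x, P.gy r G j l)) ^ 2 with hLY
  have hLYnn : ∀ i j l, 1 ≤ i → i ≤ P.m → 0 ≤ LY i j l := by
    intro i j l h1 h2
    exact intervalIntegral.integral_nonneg (hxle h1 h2) fun x _ => sq_nonneg _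
  set BY : ℕ × ℕ × ℕ × ℕ → ℝ := fun q =>
    2 * (αM ^ 2 * (P.hx q.1 * LY q.1 q.2.2.1 q.2.2.2)) +
      2 * (if q.1 = P.m then 0
        else αM ^ 2 * (P.hx (q.1 + 1) * LY (q.1 + 1) q.2.2.1 q.2.2.2)) with hBY
  have stepAY : ∀ q ∈ idxY r P, TY q ^ 2 ≤ BY q := by
    rintro ⟨i, k, j, l⟩ hq
    simp only [idxY, Finset.mem_filter, Finset.mem_product, Finset.mem_Icc] at hq
    obtain ⟨⟨⟨hi1, hi2⟩, ⟨hk1, hk2⟩, ⟨hj1, hj2⟩, hl1, hl2⟩, hnot⟩ := hq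
    have hxF := PgxFacts P hr hG hi1 hi2 hk1 hk2
    have hF1 : Continuous fun t => cellDy v i j (t, P.gy r G j l) :=
      (hcontY hi1 hi2 hj1 hj2).continuous.comp (continuous_id.prodMk continuous_const)
    have hmα : Measurable fun t : ℝ => α (t, P.gy r G j l) :=
      hα.comp (measurable_id.prodMk measurable_const)
    have hI1 := lineBound hmα hF1 (hbdH hj1 hj2 hl1 hl2 hi1 hi2)
      hxF.1 hxF.2.1 hxF.2.2.1
    beta_reduce at hI1
    simp only [hTY, hBY, hLY, Phx_eq, Nat.add_sub_cancel]
    by_cases him : i = P.m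
    · have hkr : k < r := by
        rcases Nat.lt_or_ge k r with h | h
        · exact h
        · exact absurd ⟨him, by omega⟩ hnot
      have hmax := hxF.2.2.2.2.1 hkr
      rw [hmax, intervalIntegral.integral_same, if_pos him]
      have h0 := le_trans (sq_nonneg _) hI1
      nlinarith [hI1]
    · have him' : i < P.m := by omega
      have hF2 : Continuous fun t => cellDy v (i + 1) j (t, P.gy r G j l) :=
        (hcontY (by omega) (by omega) hj1 hj2).continuous.comp
          (continuous_id.prodMk continuous_const)
      have hbd2 := hbdH hj1 hj2 hl1 hl2 (i' := i + 1) (by omega) (by omega)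
      simp only [Nat.add_sub_cancel] at hbd2
      have hI2 := lineBound hmα hF2 hbd2 le_rfl hxF.2.2.2.1 (hxF.2.2.2.2.2 him')
      beta_reduce at hI2
      rw [if_neg him]
      have hsq := sq_add2
        (∫ t in (P.gx r G i k)..(min (P.gx r G i (k + 1)) (P.x i)),
          α (t, P.gy r G j l) * cellDy v i j (t, P.gy r G j l))
        (∫ t in (P.x i)..(max (P.gx r G i (k + 1)) (P.x i)),
          α (t, P.gy r G j l) * cellDy v (i + 1) j (t, P.gy r G j l))
      linarith [hsq, hI1, hI2]
  have hTrY : ∀ {i j l : ℕ}, 1 ≤ i → i ≤ P.m → 1 ≤ j → j ≤ P.n → 1 ≤ l → l ≤ r →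
      LY i j l ≤ 2 / P.hy j * (∫ x in (P.x (i - 1))..(P.x i), ∫ y in (P.y (j - 1))..(P.y j),
          (cellDy v i j (x, y)) ^ 2)
        + 2 * P.hy j * ∫ x in (P.x (i - 1))..(P.x i), ∫ y in (P.y (j - 1))..(P.y j),
          (pdy (cellDy v i j) (x, y)) ^ 2 := by
    intro i j l hi1 hi2 hj1 hj2 hl1 hl2
    have hylt : P.y (j - 1) < P.y j := by
      have h := Phy_pos P hj1 hj2; rw [Phy_eq] at h; linarith
    have hgm := Pgy_mem P hr hG hj1 hj2 hl1 hl2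
    have h := trace2D_y (hcontY hi1 hi2 hj1 hj2) hylt ⟨hgm.1.le, hgm.2.le⟩ (hxle hi1 hi2)
    rw [hLY, Phy_eq]
    exact h
  have hcellY : ∀ {i j : ℕ}, 1 ≤ i → i ≤ P.m → 1 ≤ j → j ≤ P.n →
      αM ^ 2 * (P.hx i * (2 / P.hy j * (∫ x in (P.x (i - 1))..(P.x i),
          ∫ y in (P.y (j - 1))..(P.y j), (cellDy v i j (x, y)) ^ 2)
        + 2 * P.hy j * ∫ x in (P.x (i - 1))..(P.x i), ∫ y in (P.y (j - 1))..(P.y j),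
          (pdy (cellDy v i j) (x, y)) ^ 2)) ≤ 2 * σ * (αM ^ 2 * CT i j) := by
    intro i j hi1 hi2 hj1 hj2
    have hxp := Phx_pos P hi1 hi2
    have hyp := Phy_pos P hj1 hj2
    have hQ : P.hx i ≤ σ * P.hy j := hQU _ (Phx_mem P hi1 hi2) _ (Phy_mem P hj1 hj2)
    have hcDx := (hcontX hi1 hi2 hj1 hj2).continuous
    have hcDy := (hcontY hi1 hi2 hj1 hj2).continuous
    have hcyy : Continuous (pdy (cellDy v i j)) := by
      rw [hDy]; exact continuous_pdy (contDiff_pdy (hV2 hi1 hi2 hj1 hj2) le_rfl)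
    have hcxx : Continuous (pdx (pdx (v.cellFun i j))) :=
      continuous_pdx (contDiff_pdx (hV2 hi1 hi2 hj1 hj2) le_rfl)
    have hcxy : Continuous (pdy (pdx (v.cellFun i j))) :=
      continuous_pdy (contDiff_pdx (hV2 hi1 hi2 hj1 hj2) le_rfl)
    have hE1 : (∫ x in (P.x (i - 1))..(P.x i), ∫ y in (P.y (j - 1))..(P.y j),
        (cellDy v i j (x, y)) ^ 2)
        ≤ ∫ z in P.cell i j, ((cellDx v i j z) ^ 2 + (cellDy v i j z) ^ 2) :=
      iter_le_cell (hcDy.pow 2) ((hcDx.pow 2).add (hcDy.pow 2))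
        (fun z => le_add_of_nonneg_left (sq_nonneg _)) (hxle hi1 hi2) (hyle hj1 hj2)
    have hE2 : (∫ x in (P.x (i - 1))..(P.x i), ∫ y in (P.y (j - 1))..(P.y j),
        (pdy (cellDy v i j) (x, y)) ^ 2)
        ≤ ∫ z in P.cell i j, ((pdx (pdx (v.cellFun i j)) z) ^ 2 +
            2 * (pdy (pdx (v.cellFun i j)) z) ^ 2 + (pdy (pdy (v.cellFun i j)) z) ^ 2) := by
      apply iter_le_cell (hcyy.pow 2)
        (((hcxx.pow 2).add (continuous_const.mul (hcxy.pow 2))).add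
          ((continuous_pdy (contDiff_pdy (hV2 hi1 hi2 hj1 hj2) le_rfl)).pow 2))
        ?_ (hxle hi1 hi2) (hyle hj1 hj2)
      intro z
      have e : pdy (cellDy v i j) z = pdy (pdy (v.cellFun i j)) z := by rw [hDy]
      simp only [Pi.add_apply, Pi.mul_apply, Pi.pow_apply]
      rw [e]
      nlinarith [sq_nonneg (pdx (pdx (v.cellFun i j)) z), sq_nonneg (pdy (pdx (v.cellFun i j)) z)]
    have hE1nn : (0:ℝ) ≤ ∫ x in (P.x (i - 1))..(P.x i), ∫ y in (P.y (j - 1))..(P.y j),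
        (cellDy v i j (x, y)) ^ 2 :=
      iter_nonneg (fun z => sq_nonneg _) (hxle hi1 hi2) (hyle hj1 hj2)
    have hE2nn : (0:ℝ) ≤ ∫ x in (P.x (i - 1))..(P.x i), ∫ y in (P.y (j - 1))..(P.y j),
        (pdy (cellDy v i j) (x, y)) ^ 2 :=
      iter_nonneg (fun z => sq_nonneg _) (hxle hi1 hi2) (hyle hj1 hj2)
    have hA2nn : (0:ℝ) ≤ ∫ z in P.cell i j, ((pdx (pdx (v.cellFun i j)) z) ^ 2 +
        2 * (pdy (pdx (v.cellFun i j)) z) ^ 2 + (pdy (pdy (v.cellFun i j)) z) ^ 2) :=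
      setIntegral_nonneg (hcellmeas i j) fun z _ => by positivity
    simp only [hCT]
    set E1 := ∫ x in (P.x (i - 1))..(P.x i), ∫ y in (P.y (j - 1))..(P.y j),
        (cellDy v i j (x, y)) ^ 2 with hE1d
    set E2 := ∫ x in (P.x (i - 1))..(P.x i), ∫ y in (P.y (j - 1))..(P.y j),
        (pdy (cellDy v i j) (x, y)) ^ 2 with hE2d
    set A1 := ∫ z in P.cell i j, ((cellDx v i j z) ^ 2 + (cellDy v i j z) ^ 2) with hA1d
    set A2 := ∫ z in P.cell i j, ((pdx (pdx (v.cellFun i j)) z) ^ 2 +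
        2 * (pdy (pdx (v.cellFun i j)) z) ^ 2 + (pdy (pdy (v.cellFun i j)) z) ^ 2) with hA2d
    have key1 : P.hx i * (2 / P.hy j) ≤ 2 * σ := by
      rw [mul_div_assoc', div_le_iff₀ hyp]
      nlinarith
    have key2 : P.hx i * (2 * P.hy j) ≤ P.hx i ^ 2 + P.hy j ^ 2 := by
      nlinarith [sq_nonneg (P.hx i - P.hy j)]
    have step1 : P.hx i * (2 / P.hy j * E1) ≤ 2 * σ * A1 := by
      have e : P.hx i * (2 / P.hy j * E1) = (P.hx i * (2 / P.hy j)) * E1 := by ring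
      rw [e]
      exact le_trans (mul_le_mul_of_nonneg_right key1 hE1nn)
        (mul_le_mul_of_nonneg_left hE1 (by positivity))
    have step2 : P.hx i * (2 * P.hy j * E2) ≤ (P.hx i ^ 2 + P.hy j ^ 2) * A2 := by
      have e : P.hx i * (2 * P.hy j * E2) = (P.hx i * (2 * P.hy j)) * E2 := by ring
      rw [e]
      exact le_trans (mul_le_mul_of_nonneg_right key2 hE2nn)
        (mul_le_mul_of_nonneg_left hE2 (by positivity))
    have hh : (P.hx i ^ 2 + P.hy j ^ 2) * A2 ≤ 2 * σ * ((P.hx i ^ 2 + P.hy j ^ 2) * A2) := by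
      nlinarith [mul_nonneg (by positivity : (0:ℝ) ≤ P.hx i ^ 2 + P.hy j ^ 2) hA2nn]
    have hfin : P.hx i * (2 / P.hy j * E1 + 2 * P.hy j * E2)
        ≤ 2 * σ * (A1 + (P.hx i ^ 2 + P.hy j ^ 2) * A2) := by
      have hd1 : P.hx i * (2 / P.hy j * E1 + 2 * P.hy j * E2)
          = P.hx i * (2 / P.hy j * E1) + P.hx i * (2 * P.hy j * E2) := by ring
      have hd2 : 2 * σ * (A1 + (P.hx i ^ 2 + P.hy j ^ 2) * A2)
          = 2 * σ * A1 + 2 * σ * ((P.hx i ^ 2 + P.hy j ^ 2) * A2) := by ring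
      linarith [step1, step2, hh]
    calc αM ^ 2 * (P.hx i * (2 / P.hy j * E1 + 2 * P.hy j * E2))
        ≤ αM ^ 2 * (2 * σ * (A1 + (P.hx i ^ 2 + P.hy j ^ 2) * A2)) :=
          mul_le_mul_of_nonneg_left hfin (sq_nonneg _)
      _ = 2 * σ * (αM ^ 2 * (A1 + (P.hx i ^ 2 + P.hy j ^ 2) * A2)) := by ring
  have hTYsum : (∑ q ∈ idxY r P, TY q ^ 2) ≤ 8 * σ * (r:ℝ) ^ 2 * αM ^ 2 * S := by
    have h1 : (∑ q ∈ idxY r P, TY q ^ 2) ≤ ∑ q ∈ idxY r P, BY q := Finset.sum_le_sum stepAY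
    have hBYnn : ∀ q ∈ Finset.Icc 1 P.m ×ˢ Finset.Icc 1 r ×ˢ Finset.Icc 1 P.n ×ˢ
        Finset.Icc 1 r, 0 ≤ BY q := by
      rintro ⟨i, k, j, l⟩ hq
      simp only [Finset.mem_product, Finset.mem_Icc] at hq
      obtain ⟨hi, hk, hj, hl⟩ := hq
      simp only [hBY]
      apply add_nonneg
      · exact mul_nonneg (by norm_num) (mul_nonneg (sq_nonneg _)
          (mul_nonneg (Phx_pos P hi.1 hi.2).le (hLYnn _ _ _ hi.1 hi.2)))
      · apply mul_nonneg (by norm_num)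
        by_cases him : i = P.m
        · rw [if_pos him]
        · rw [if_neg him]
          exact mul_nonneg (sq_nonneg _) (mul_nonneg (Phx_pos P (by omega) (by omega)).le
            (hLYnn _ _ _ (by omega) (by omega)))
    have h2 : (∑ q ∈ idxY r P, BY q) ≤ ∑ q ∈ Finset.Icc 1 P.m ×ˢ Finset.Icc 1 r ×ˢ
        Finset.Icc 1 P.n ×ˢ Finset.Icc 1 r, BY q := by
      apply Finset.sum_le_sum_of_subset_of_nonneg (Finset.filter_subset _ _)
      exact fun q hq _ => hBYnn q hq
    have h3 : (∑ q ∈ Finset.Icc 1 P.m ×ˢ Finset.Icc 1 r ×ˢ Finset.Icc 1 P.n ×ˢ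
        Finset.Icc 1 r, BY q)
        = ∑ i ∈ Finset.Icc 1 P.m, ∑ k ∈ Finset.Icc 1 r, ∑ j ∈ Finset.Icc 1 P.n,
            ∑ l ∈ Finset.Icc 1 r, BY (i, k, j, l) := by
      rw [Finset.sum_product]
      exact Finset.sum_congr rfl fun i _ => by
        rw [Finset.sum_product]
        exact Finset.sum_congr rfl fun k _ => by rw [Finset.sum_product]
    have h4 : ∀ i, (∑ k ∈ Finset.Icc 1 r, ∑ j ∈ Finset.Icc 1 P.n,
        ∑ l ∈ Finset.Icc 1 r, BY (i, k, j, l))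
        = (r:ℝ) * ∑ j ∈ Finset.Icc 1 P.n, ∑ l ∈ Finset.Icc 1 r, BY (i, 1, j, l) := by
      intro i
      have hconst : ∀ k ∈ Finset.Icc 1 r, (∑ j ∈ Finset.Icc 1 P.n,
          ∑ l ∈ Finset.Icc 1 r, BY (i, k, j, l))
          = ∑ j ∈ Finset.Icc 1 P.n, ∑ l ∈ Finset.Icc 1 r, BY (i, 1, j, l) := fun k _ => rfl
      rw [Finset.sum_congr rfl hconst, Finset.sum_const, Nat.card_Icc, nsmul_eq_mul]
      norm_num
    have h5 : ∀ j ∈ Finset.Icc 1 P.n, ∀ l ∈ Finset.Icc 1 r,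
        (∑ i ∈ Finset.Icc 1 P.m, BY (i, 1, j, l))
          ≤ 4 * ∑ i ∈ Finset.Icc 1 P.m, αM ^ 2 * (P.hx i * LY i j l) := by
      intro j hj l hl
      have he : ∀ i, BY (i, 1, j, l)
          = (αM ^ 2 * (P.hx i * LY i j l)) * 2 +
            (if i = P.m then 0 else αM ^ 2 * (P.hx (i + 1) * LY (i + 1) j l)) * 2 :=
        fun i => by simp only [hBY]; ring
      rw [Finset.sum_congr rfl fun i _ => he i, Finset.sum_add_distrib,
        ← Finset.sum_mul, ← Finset.sum_mul]
      have hsh := shift_sum_le (n := P.m) (fun i => αM ^ 2 * (P.hx i * LY i j l))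
        (fun i hi => by
          rw [Finset.mem_Icc] at hi
          exact mul_nonneg (sq_nonneg _) (mul_nonneg (Phx_pos P hi.1 hi.2).le
            (hLYnn _ _ _ hi.1 hi.2)))
      beta_reduce at hsh
      linarith [hsh]
    have h6 : ∀ j ∈ Finset.Icc 1 P.n, ∀ l ∈ Finset.Icc 1 r,
        (∑ i ∈ Finset.Icc 1 P.m, αM ^ 2 * (P.hx i * LY i j l))
          ≤ ∑ i ∈ Finset.Icc 1 P.m, 2 * σ * (αM ^ 2 * CT i j) := by
      intro j hj l hl
      rw [Finset.mem_Icc] at hj hl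
      apply Finset.sum_le_sum
      intro i hi
      rw [Finset.mem_Icc] at hi
      have htr := hTrY hi.1 hi.2 hj.1 hj.2 hl.1 hl.2
      exact le_trans (mul_le_mul_of_nonneg_left
          (mul_le_mul_of_nonneg_left htr (Phx_pos P hi.1 hi.2).le) (sq_nonneg _))
        (hcellY hi.1 hi.2 hj.1 hj.2)
    calc (∑ q ∈ idxY r P, TY q ^ 2)
        ≤ ∑ q ∈ idxY r P, BY q := h1
      _ ≤ ∑ q ∈ Finset.Icc 1 P.m ×ˢ Finset.Icc 1 r ×ˢ Finset.Icc 1 P.n ×ˢ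
            Finset.Icc 1 r, BY q := h2
      _ = ∑ i ∈ Finset.Icc 1 P.m, ∑ k ∈ Finset.Icc 1 r, ∑ j ∈ Finset.Icc 1 P.n,
            ∑ l ∈ Finset.Icc 1 r, BY (i, k, j, l) := h3
      _ = ∑ i ∈ Finset.Icc 1 P.m,
            (r:ℝ) * ∑ j ∈ Finset.Icc 1 P.n, ∑ l ∈ Finset.Icc 1 r, BY (i, 1, j, l) :=
          Finset.sum_congr rfl fun i _ => h4 i
      _ = (r:ℝ) * ∑ i ∈ Finset.Icc 1 P.m, ∑ j ∈ Finset.Icc 1 P.n,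
            ∑ l ∈ Finset.Icc 1 r, BY (i, 1, j, l) := by rw [Finset.mul_sum]
      _ = (r:ℝ) * ∑ j ∈ Finset.Icc 1 P.n, ∑ l ∈ Finset.Icc 1 r,
            ∑ i ∈ Finset.Icc 1 P.m, BY (i, 1, j, l) := by
          congr 1
          rw [Finset.sum_comm]
          exact Finset.sum_congr rfl fun j _ => Finset.sum_comm
      _ ≤ (r:ℝ) * ∑ j ∈ Finset.Icc 1 P.n, ∑ l ∈ Finset.Icc 1 r,
            (4 * ∑ i ∈ Finset.Icc 1 P.m, αM ^ 2 * (P.hx i * LY i j l)) := by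
          apply mul_le_mul_of_nonneg_left ?_ (by positivity)
          apply Finset.sum_le_sum; intro j hj
          apply Finset.sum_le_sum; intro l hl
          exact h5 j hj l hl
      _ ≤ (r:ℝ) * ∑ j ∈ Finset.Icc 1 P.n, ∑ l ∈ Finset.Icc 1 r,
            (4 * ∑ i ∈ Finset.Icc 1 P.m, 2 * σ * (αM ^ 2 * CT i j)) := by
          apply mul_le_mul_of_nonneg_left ?_ (by positivity)
          apply Finset.sum_le_sum; intro j hj
          apply Finset.sum_le_sum; intro l hl
          exact mul_le_mul_of_nonneg_left (h6 j hj l hl) (by norm_num)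
      _ = (r:ℝ) * ∑ j ∈ Finset.Icc 1 P.n,
            (r:ℝ) * (4 * ∑ i ∈ Finset.Icc 1 P.m, 2 * σ * (αM ^ 2 * CT i j)) := by
          congr 1
          apply Finset.sum_congr rfl; intro j _
          rw [Finset.sum_const, Nat.card_Icc, nsmul_eq_mul]
          norm_num
      _ = 8 * σ * (r:ℝ) ^ 2 * αM ^ 2 * S := by
          rw [hS, Finset.sum_comm (s := Finset.Icc 1 P.m)]
          rw [Finset.mul_sum, Finset.mul_sum]
          apply Finset.sum_congr rfl; intro j _
          rw [Finset.mul_sum, Finset.mul_sum, Finset.mul_sum, Finset.mul_sum]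
          apply Finset.sum_congr rfl; intro i _
          ring
  ---------------------------------------------------------------- endgame
  have key : ∀ (J T : ℕ × ℕ × ℕ × ℕ → ℝ) (idx : Finset (ℕ × ℕ × ℕ × ℕ)),
      (∑ q ∈ idx, J q ^ 2) ≤ dualSemi r P w ^ 2 →
      (∑ q ∈ idx, T q ^ 2) ≤ 8 * σ * (r:ℝ) ^ 2 * αM ^ 2 * S →
      |∑ q ∈ idx, J q * T q| ≤ 3 * σ * r * αM * semiP P v * dualSemi r P w := by
    intro J T idx hJ hT
    have hcs := Finset.sum_mul_sq_le_sq_mul_sq idx J T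
    have hTnn : 0 ≤ ∑ q ∈ idx, T q ^ 2 := Finset.sum_nonneg fun q _ => sq_nonneg _
    have h8 : 8 * σ * (r:ℝ) ^ 2 * αM ^ 2 * S ≤ (3 * σ * r * αM * semiP P v) ^ 2 := by
      have e : (3 * σ * r * αM * semiP P v) ^ 2 = 9 * σ ^ 2 * ((r:ℝ) ^ 2 * (αM ^ 2 * S)) := by
        rw [mul_pow, mul_pow, mul_pow, hsemi2]; ring
      have h9 : 8 * σ ≤ 9 * σ ^ 2 := by nlinarith
      have h10 : (0:ℝ) ≤ (r:ℝ) ^ 2 * (αM ^ 2 * S) :=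
        mul_nonneg (sq_nonneg _) (mul_nonneg (sq_nonneg _) hSnn)
      calc 8 * σ * (r:ℝ) ^ 2 * αM ^ 2 * S = 8 * σ * ((r:ℝ) ^ 2 * (αM ^ 2 * S)) := by ring
        _ ≤ 9 * σ ^ 2 * ((r:ℝ) ^ 2 * (αM ^ 2 * S)) := mul_le_mul_of_nonneg_right h9 h10
        _ = (3 * σ * r * αM * semiP P v) ^ 2 := e.symm
    have hprod : (∑ q ∈ idx, J q * T q) ^ 2
        ≤ (dualSemi r P w) ^ 2 * (3 * σ * r * αM * semiP P v) ^ 2 :=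
      le_trans hcs (mul_le_mul hJ (le_trans hT h8) hTnn (sq_nonneg _))
    have hrhsnn : 0 ≤ 3 * σ * r * αM * semiP P v := by
      have h0 : (0:ℝ) ≤ 3 * σ * r := by positivity
      exact mul_nonneg (mul_nonneg h0 hαM) hsemiNN
    calc |∑ q ∈ idx, J q * T q|
        = Real.sqrt ((∑ q ∈ idx, J q * T q) ^ 2) := (Real.sqrt_sq_eq_abs _).symm
      _ ≤ Real.sqrt ((dualSemi r P w) ^ 2 * (3 * σ * r * αM * semiP P v) ^ 2) :=
          Real.sqrt_le_sqrt hprod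
      _ = dualSemi r P w * (3 * σ * r * αM * semiP P v) := by
          rw [← mul_pow, Real.sqrt_sq (mul_nonneg hdualNN hrhsnn)]
      _ = 3 * σ * r * αM * semiP P v * dualSemi r P w := by ring
  have hJX : (∑ q ∈ idxX r P, (jumpX r w q.1 q.2.1 q.2.2.1 q.2.2.2) ^ 2)
      ≤ dualSemi r P w ^ 2 := by
    rw [hdual2]
    exact le_add_of_nonneg_right (Finset.sum_nonneg fun q _ => sq_nonneg _)
  have hJY : (∑ q ∈ idxY r P, (jumpY r w q.1 q.2.1 q.2.2.1 q.2.2.2) ^ 2)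
      ≤ dualSemi r P w ^ 2 := by
    rw [hdual2]
    exact le_add_of_nonneg_left (Finset.sum_nonneg fun q _ => sq_nonneg _)
  have haP : aP r G P α (cellDx v) (cellDy v) w
      = (∑ q ∈ idxX r P, jumpX r w q.1 q.2.1 q.2.2.1 q.2.2.2 * TX q)
        + (∑ q ∈ idxY r P, jumpY r w q.1 q.2.1 q.2.2.1 q.2.2.2 * TY q) := rfl
  calc |aP r G P α (cellDx v) (cellDy v) w|
      ≤ |∑ q ∈ idxX r P, jumpX r w q.1 q.2.1 q.2.2.1 q.2.2.2 * TX q|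
        + |∑ q ∈ idxY r P, jumpY r w q.1 q.2.1 q.2.2.1 q.2.2.2 * TY q| := by
        rw [haP]; exact abs_add_le _ _
    _ ≤ 3 * σ * r * αM * semiP P v * dualSemi r P w
        + 3 * σ * r * αM * semiP P v * dualSemi r P w :=
        add_le_add (key _ TX _ hJX hTXsum) (key _ TY _ hJY hTYsum)
    _ = 6 * σ * r * αM * semiP P v * dualSemi r P w := by ring
end
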